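/- arXiv:1609.03990 — 9 statements merged into one kernel-verified Lean document; each statement's English description precedes it below -/
import Mathlib

section
/- Let Φ : X → S(Y) be a strict set-valued mapping between metric spaces and f : Gr(Φ) → ℝ̄ satisfy: whenever xₙ → x in X, every sequence {yₙ} with yₙ ∈ Φ(xₙ) such that {f(xₙ,yₙ)} is bounded above has a limit point y ∈ Φ(x). Then all sublevel sets D_f(λ; Gr(Φ)) = {(x,y) ∈ Gr(Φ) : f(x,y) ≤ λ}, λ ∈ ℝ, are closed in X × Y if and only if f is lower semi-continuous on Gr(Φ). -/
open Filter Topology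

/-- Corollary 2.3: for a strict set-valued mapping `Φ` and `f` satisfying condition (ii),
all sublevel sets of `f` on `Gr(Φ)` are closed in `X × Y` iff `f` is lower
semicontinuous on `Gr(Φ)`. -/
theorem stmt2 {X Y : Type*} [MetricSpace X] [MetricSpace Y]
    (Φ : X → Set Y) (hstrict : ∀ x, (Φ x).Nonempty)
    (f : X × Y → EReal)
    (hii : ∀ (x : X) (xs : ℕ → X), Tendsto xs atTop (𝓝 x) →
      ∀ ys : ℕ → Y, (∀ n, ys n ∈ Φ (xs n)) →
        (∃ M : ℝ, ∀ n, f (xs n, ys n) ≤ (M : EReal)) →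
        ∃ y ∈ Φ x, MapClusterPt y atTop ys) :
    (∀ l : ℝ, IsClosed {p : X × Y | p.2 ∈ Φ p.1 ∧ f p ≤ (l : EReal)}) ↔
      LowerSemicontinuousOn f {p : X × Y | p.2 ∈ Φ p.1} := by
  constructor
  · intro hcl p hp z hz
    by_contra hcon
    rw [Filter.not_eventually] at hcon
    obtain ⟨l, hzl, hlf⟩ := EReal.exists_between_coe_real hz
    have h1 : ∃ᶠ q in 𝓝[{q : X × Y | q.2 ∈ Φ q.1}] p, q.2 ∈ Φ q.1 ∧ f q ≤ (l : EReal) := by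
      refine (hcon.and_eventually eventually_mem_nhdsWithin).mono ?_
      rintro q ⟨hq2, hq⟩
      push_neg at hq2
      exact ⟨hq, le_trans hq2 hzl.le⟩
    have hfreq : ∃ᶠ q in 𝓝 p, q ∈ {q : X × Y | q.2 ∈ Φ q.1 ∧ f q ≤ (l : EReal)} :=
      h1.filter_mono nhdsWithin_le_nhds
    have := ((hcl l).closure_eq ▸ mem_closure_iff_frequently.2 hfreq : _)
    exact absurd this.2 (not_le.2 hlf)
  · intro hlsc l
    apply IsSeqClosed.isClosed
    intro ps p hps hlim
    set xs : ℕ → X := fun n => (ps n).1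
    set ys : ℕ → Y := fun n => (ps n).2
    have hx : Tendsto xs atTop (𝓝 p.1) := (continuous_fst.tendsto p).comp hlim
    have hy : Tendsto ys atTop (𝓝 p.2) := (continuous_snd.tendsto p).comp hlim
    obtain ⟨y, hyΦ, hycl⟩ := hii p.1 xs hx ys (fun n => (hps n).1)
      ⟨l, fun n => (hps n).2⟩
    have hyeq : y = p.2 := by
      have hnb : (𝓝 y ⊓ map ys atTop).NeBot := hycl
      exact eq_of_nhds_neBot (hnb.mono (inf_le_inf_left _ hy))
    subst hyeq
    have hpmem : p ∈ {q : X × Y | q.2 ∈ Φ q.1} := hyΦ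
    refine ⟨hyΦ, ?_⟩
    by_contra hgt
    rw [not_le] at hgt
    have := hlsc p hpmem (l : EReal) hgt
    have htendsto : Tendsto ps atTop (𝓝[{q : X × Y | q.2 ∈ Φ q.1}] p) :=
      tendsto_nhdsWithin_of_tendsto_nhds_of_eventually_within _ hlim
        (Filter.Eventually.of_forall fun n => (hps n).1)
    have := (htendsto.eventually this).exists
    obtain ⟨n, hn⟩ := this
    exact absurd (hps n).2 (not_le.2 hn)
end

section
/- Let X, Y be metric spaces, Φ : X → 2^Y a set-valued mapping, and f : Gr(Φ) → ℝ̄. If f is lower semi-continuous on Gr(Φ) and Φ is upper semi-continuous and compact-valued at each x ∈ Dom Φ, then f is K-inf-compact on Gr(Φ). -/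
open Filter Topology

/-- Lemma 2.4(b): if `f` is lower semicontinuous on `Gr(Φ)` and `Φ` is upper
semicontinuous and compact-valued at each point of its domain, then `f` is
`K`-inf-compact on `Gr(Φ)`. -/
theorem stmt3 {X Y : Type*} [MetricSpace X] [MetricSpace Y]
    (Φ : X → Set Y) (f : X × Y → EReal)
    (hf : LowerSemicontinuousOn f {p : X × Y | p.2 ∈ Φ p.1})
    (husc : ∀ x ∈ {x | (Φ x).Nonempty}, ∀ G : Set Y, IsOpen G → Φ x ⊆ G →
      ∃ U ∈ 𝓝 x, ∀ x' ∈ U ∩ {x | (Φ x).Nonempty}, Φ x' ⊆ G)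
    (hcomp : ∀ x ∈ {x | (Φ x).Nonempty}, IsCompact (Φ x)) :
    ∀ C : Set X, C.Nonempty → IsCompact C → C ⊆ {x | (Φ x).Nonempty} →
      ∀ l : ℝ, IsCompact {p : X × Y | p.1 ∈ C ∧ p.2 ∈ Φ p.1 ∧ f p ≤ (l : EReal)} := by
  intro C _ hCcomp hCdom l
  set S := {p : X × Y | p.1 ∈ C ∧ p.2 ∈ Φ p.1 ∧ f p ≤ (l : EReal)} with hSdef
  rw [isCompact_iff_ultrafilter_le_nhds]
  intro F hF
  have hS : S ∈ F := le_principal_iff.mp hF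
  -- first coordinate converges
  have hCmem : Prod.fst ⁻¹' C ∈ F := F.mem_of_superset hS fun p hp => hp.1
  obtain ⟨x, hxC, hx⟩ := hCcomp.ultrafilter_le_nhds (F.map Prod.fst)
    (le_principal_iff.mpr (mem_map.mpr hCmem))
  have hxdom : x ∈ {x | (Φ x).Nonempty} := hCdom hxC
  -- key: any open superset of Φ x catches the second coordinate
  have key : ∀ G : Set Y, IsOpen G → Φ x ⊆ G → {p : X × Y | p.2 ∈ G} ∈ F := by
    intro G hG hsub
    obtain ⟨U, hU, hUsub⟩ := husc x hxdom G hG hsub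
    have h1 : Prod.fst ⁻¹' U ∈ F := hx hU
    filter_upwards [h1, hS] with p hp1 hp2
    exact hUsub p.1 ⟨hp1, hCdom hp2.1⟩ hp2.2.1
  -- second coordinate converges to some y ∈ Φ x
  have hcx := hcomp x hxdom
  have hy : ∃ y ∈ Φ x, (F.map Prod.snd : Filter Y) ≤ 𝓝 y := by
    by_contra hno
    push_neg at hno
    have hV : ∀ y ∈ Φ x, ∃ V : Set Y, IsOpen V ∧ y ∈ V ∧
        {p : X × Y | p.2 ∈ V} ∉ F := by
      intro y hyΦ
      have := hno y hyΦ
      rw [Filter.le_def] at this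
      push_neg at this
      obtain ⟨s, hs, hsF⟩ := this
      obtain ⟨V, hVs, hVopen, hyV⟩ := mem_nhds_iff.mp hs
      refine ⟨V, hVopen, hyV, fun hmem => hsF ?_⟩
      exact mem_map.mpr (F.mem_of_superset hmem fun p hp => hVs hp)
    choose V hVopen hVmem hVnot using hV
    obtain ⟨t, hcover⟩ := hcx.elim_nhds_subcover' (fun y hy => V y hy)
      (fun y hy => (hVopen y hy).mem_nhds (hVmem y hy))
    have hG : {p : X × Y | p.2 ∈ ⋃ y ∈ t, V y y.2} ∈ F :=
      key _ (isOpen_biUnion fun y _ => hVopen y y.2) hcover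
    have hGc : {p : X × Y | p.2 ∈ ⋃ y ∈ t, V y y.2}ᶜ ∈ F := by
      have : ∀ y ∈ t, {p : X × Y | p.2 ∈ V y y.2}ᶜ ∈ F := fun y _ =>
        (Ultrafilter.compl_mem_iff_notMem).mpr (hVnot y y.2)
      have hInt : (⋂ y ∈ t, {p : X × Y | p.2 ∈ V y y.2}ᶜ) ∈ F :=
        (Filter.biInter_mem t.finite_toSet).mpr this
      refine F.mem_of_superset hInt fun p hp hpG => ?_
      simp only [Set.mem_iUnion] at hpG
      obtain ⟨y, hyt, hpy⟩ := hpG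
      exact (Set.mem_iInter₂.mp hp y hyt) hpy
    exact (Ultrafilter.compl_mem_iff_notMem.mp hGc) hG
  obtain ⟨y, hyΦ, hy⟩ := hy
  refine ⟨(x, y), ?_, ?_⟩
  · -- (x, y) ∈ S
    refine ⟨hxC, hyΦ, ?_⟩
    by_contra hfl
    push_neg at hfl
    have hGr : {p : X × Y | p.2 ∈ Φ p.1} ∈ F :=
      F.mem_of_superset hS fun p hp => hp.2.1
    have hFn : (F : Filter (X × Y)) ≤ 𝓝 (x, y) := by
      rw [nhds_prod_eq, Filter.le_prod]
      exact ⟨hx, hy⟩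
    have hFw : (F : Filter (X × Y)) ≤ 𝓝[{p : X × Y | p.2 ∈ Φ p.1}] (x, y) :=
      le_inf hFn (le_principal_iff.mpr hGr)
    have := hf (x, y) hyΦ (l : EReal) hfl
    have hlt : {p : X × Y | (l : EReal) < f p} ∈ F := hFw this
    obtain ⟨p, hp1, hp2⟩ := Ultrafilter.nonempty_of_mem (Filter.inter_mem hlt hS)
    exact absurd hp2.2.2 (not_le.mpr hp1)
  · rw [nhds_prod_eq, Filter.le_prod]
    exact ⟨hx, hy⟩
end

section
/- Let X, Y be metric spaces, Φ : X → 2^Y with Dom Φ ≠ ∅, and f : Gr(Φ) → ℝ̄ be K-inf-compact on Gr(Φ). Then the value function f*(x) = inf_{y ∈ Φ(x)} f(x,y) is lower semi-continuous on Dom Φ, the infimum is attained for every x ∈ Dom Φ, and for each x ∈ Dom Φ the solution set Φ*(x) = {y ∈ Φ(x) : f(x,y) = f*(x)} is compact whenever f*(x) < +∞. -/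
open Filter Topology

/-- Theorem 2.1: if `f` is `K`-inf-compact on `Gr(Φ)`, then the value function
`f* x = ⨅ y ∈ Φ x, f (x, y)` is lower semicontinuous on `Dom Φ`, the infimum is
attained, and the solution set is compact whenever `f* x < +∞`. -/
theorem stmt5 {X Y : Type*} [MetricSpace X] [MetricSpace Y]
    (Φ : X → Set Y) (hdom : {x | (Φ x).Nonempty}.Nonempty)
    (f : X × Y → EReal)
    (hK : ∀ C : Set X, C.Nonempty → IsCompact C → C ⊆ {x | (Φ x).Nonempty} →
      ∀ l : ℝ, IsCompact {p : X × Y | p.1 ∈ C ∧ p.2 ∈ Φ p.1 ∧ f p ≤ (l : EReal)}) :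
    LowerSemicontinuousOn (fun x => ⨅ y ∈ Φ x, f (x, y)) {x | (Φ x).Nonempty} ∧
    (∀ x ∈ {x | (Φ x).Nonempty}, ∃ y ∈ Φ x, f (x, y) = ⨅ y' ∈ Φ x, f (x, y')) ∧
    (∀ x ∈ {x | (Φ x).Nonempty}, (⨅ y ∈ Φ x, f (x, y)) < ⊤ →
      IsCompact {y | y ∈ Φ x ∧ f (x, y) = ⨅ y' ∈ Φ x, f (x, y')}) := by
  -- compactness of the sublevel slices at a fixed point
  have slice : ∀ x, (Φ x).Nonempty → ∀ l : ℝ,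
      IsCompact {y | y ∈ Φ x ∧ f (x, y) ≤ (l : EReal)} := by
    intro x hx l
    have hC := hK {x} ⟨x, rfl⟩ isCompact_singleton (by simpa using hx) l
    have heq : {y | y ∈ Φ x ∧ f (x, y) ≤ (l : EReal)} =
        Prod.snd '' {p : X × Y | p.1 ∈ ({x} : Set X) ∧ p.2 ∈ Φ p.1 ∧ f p ≤ (l : EReal)} := by
      ext y
      constructor
      · rintro ⟨h1, h2⟩
        exact ⟨(x, y), ⟨rfl, h1, h2⟩, rfl⟩
      · rintro ⟨⟨a, b⟩, ⟨ha, h1, h2⟩, rfl⟩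
        obtain rfl : a = x := ha
        exact ⟨h1, h2⟩
    rw [heq]
    exact hC.image continuous_snd
  -- attainment of the infimum
  have hattain : ∀ x, (Φ x).Nonempty →
      ∃ y ∈ Φ x, f (x, y) = ⨅ y' ∈ Φ x, f (x, y') := by
    intro x hx
    set m := ⨅ y' ∈ Φ x, f (x, y') with hm
    rcases eq_or_lt_of_le (le_top : m ≤ ⊤) with htop | hlt
    · obtain ⟨y, hy⟩ := hx
      refine ⟨y, hy, ?_⟩
      have h1 : m ≤ f (x, y) := iInf₂_le y hy
      rw [htop] at h1 ⊢
      exact top_le_iff.mp h1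
    · -- m < ⊤ : use compactness of nested sublevel sets
      obtain ⟨q₀, hq₀, _⟩ := EReal.exists_rat_btwn_of_lt hlt
      let ι := {l : ℚ // m < ((l : ℝ) : EReal)}
      haveI : Nonempty ι := ⟨⟨q₀, hq₀⟩⟩
      set Z : ι → Set Y := fun l => {y | y ∈ Φ x ∧ f (x, y) ≤ ((l.1 : ℝ) : EReal)} with hZ
      have hZcomp : ∀ i, IsCompact (Z i) := fun i => slice x hx _
      have hZne : ∀ i, (Z i).Nonempty := by
        intro i
        by_contra h
        rw [Set.not_nonempty_iff_eq_empty] at h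
        have hle : ((i.1 : ℝ) : EReal) ≤ m := by
          refine le_iInf₂ fun y hy => ?_
          by_contra hlt'
          push_neg at hlt'
          have hmem : y ∈ Z i := ⟨hy, hlt'.le⟩
          rw [h] at hmem
          exact hmem
        exact absurd i.2 (not_lt.mpr hle)
      have hdir : Directed (· ⊇ ·) Z := by
        intro i j
        rcases le_total (i.1 : ℚ) j.1 with hij | hij
        · exact ⟨i, le_refl _, fun y hy => ⟨hy.1, hy.2.trans (by exact_mod_cast hij)⟩⟩
        · exact ⟨j, (fun y hy => ⟨hy.1, hy.2.trans (by exact_mod_cast hij)⟩), le_refl _⟩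
      obtain ⟨y, hy⟩ := IsCompact.nonempty_iInter_of_directed_nonempty_isCompact_isClosed
        Z hdir hZne hZcomp (fun i => (hZcomp i).isClosed)
      have hyΦ : y ∈ Φ x := (Set.mem_iInter.mp hy ⟨q₀, hq₀⟩).1
      have hylem : f (x, y) ≤ m := by
        rw [← EReal.le_of_forall_lt_iff_le]
        intro z hz
        obtain ⟨q, hq1, hq2⟩ := EReal.exists_rat_btwn_of_lt hz
        exact ((Set.mem_iInter.mp hy ⟨q, hq1⟩).2).trans hq2.le
      exact ⟨y, hyΦ, le_antisymm hylem (iInf₂_le y hyΦ)⟩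
  refine ⟨?_, fun x hx => hattain x hx, ?_⟩
  · -- lower semicontinuity
    intro x₀ hx₀ c hc
    by_contra hcon
    rw [Filter.not_eventually] at hcon
    have hfreq : ∃ᶠ x in 𝓝 x₀, (¬ c < ⨅ y ∈ Φ x, f (x, y)) ∧ x ∈ {x | (Φ x).Nonempty} :=
      frequently_nhdsWithin_iff.mp hcon
    have hclos : x₀ ∈ closure {x | (¬ c < ⨅ y ∈ Φ x, f (x, y)) ∧ x ∈ {x | (Φ x).Nonempty}} :=
      mem_closure_iff_frequently.mpr hfreq
    obtain ⟨u, hu_mem, hu_lim⟩ := mem_closure_iff_seq_limit.mp hclos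
    obtain ⟨q, hq1, hq2⟩ := EReal.exists_rat_btwn_of_lt hc
    set C : Set X := insert x₀ (Set.range u) with hC
    have hCcomp : IsCompact C := hu_lim.isCompact_insert_range
    have hCsub : C ⊆ {x | (Φ x).Nonempty} := by
      rintro x (rfl | ⟨n, rfl⟩)
      · exact hx₀
      · exact (hu_mem n).2
    have hKC := hK C ⟨x₀, Set.mem_insert _ _⟩ hCcomp hCsub (q : ℝ)
    -- choose near-optimal points
    have hsel : ∀ n, ∃ y ∈ Φ (u n), f (u n, y) ≤ ((q : ℝ) : EReal) := by
      intro n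
      by_contra h
      push_neg at h
      have : ((q : ℝ) : EReal) ≤ ⨅ y ∈ Φ (u n), f (u n, y) :=
        le_iInf₂ fun y hy => (h y hy).le
      have hle : (⨅ y ∈ Φ (u n), f (u n, y)) ≤ c := not_lt.mp (hu_mem n).1
      exact absurd (this.trans hle) (not_le.mpr hq1)
    choose yseq hyΦ hyle using hsel
    set v : ℕ → X × Y := fun n => (u n, yseq n) with hv
    have hvK : ∀ n, v n ∈ {p : X × Y | p.1 ∈ C ∧ p.2 ∈ Φ p.1 ∧ f p ≤ ((q : ℝ) : EReal)} :=
      fun n => ⟨Set.mem_insert_iff.mpr (Or.inr ⟨n, rfl⟩), hyΦ n, hyle n⟩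
    obtain ⟨p, hpK, φ, hφ, hvlim⟩ := hKC.tendsto_subseq hvK
    have h1 : Tendsto (fun n => (v (φ n)).1) atTop (𝓝 p.1) :=
      (continuous_fst.tendsto p).comp hvlim
    have h2 : Tendsto (fun n => (v (φ n)).1) atTop (𝓝 x₀) :=
      hu_lim.comp hφ.tendsto_atTop
    have hp1 : p.1 = x₀ := tendsto_nhds_unique h1 h2
    have hfin : (⨅ y ∈ Φ x₀, f (x₀, y)) ≤ f (x₀, p.2) := iInf₂_le p.2 (hp1 ▸ hpK.2.1)
    have : f (x₀, p.2) ≤ ((q : ℝ) : EReal) := by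
      have := hpK.2.2
      rwa [show p = (x₀, p.2) from Prod.ext hp1 rfl] at this
    exact absurd ((hfin.trans this).trans_lt hq2) (lt_irrefl _)
  · -- compactness of the solution set
    intro x hx hlt
    set m := ⨅ y' ∈ Φ x, f (x, y') with hm
    obtain ⟨q₀, hq₀, _⟩ := EReal.exists_rat_btwn_of_lt hlt
    let ι := {l : ℚ // m < ((l : ℝ) : EReal)}
    haveI : Nonempty ι := ⟨⟨q₀, hq₀⟩⟩
    set Z : ι → Set Y := fun l => {y | y ∈ Φ x ∧ f (x, y) ≤ ((l.1 : ℝ) : EReal)} with hZ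
    have hZcomp : ∀ i, IsCompact (Z i) := fun i => slice x hx _
    have heq : {y | y ∈ Φ x ∧ f (x, y) = m} = ⋂ i, Z i := by
      ext y
      constructor
      · rintro ⟨h1, h2⟩
        exact Set.mem_iInter.mpr fun i => ⟨h1, h2.le.trans i.2.le⟩
      · intro hy
        have hyΦ : y ∈ Φ x := (Set.mem_iInter.mp hy ⟨q₀, hq₀⟩).1
        have hylem : f (x, y) ≤ m := by
          rw [← EReal.le_of_forall_lt_iff_le]
          intro z hz
          obtain ⟨q, hq1, hq2⟩ := EReal.exists_rat_btwn_of_lt hz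
          exact ((Set.mem_iInter.mp hy ⟨q, hq1⟩).2).trans hq2.le
        exact ⟨hyΦ, le_antisymm hylem (iInf₂_le y hyΦ)⟩
    rw [heq]
    exact IsCompact.of_isClosed_subset (hZcomp ⟨q₀, hq₀⟩)
      (isClosed_iInter fun i => (hZcomp i).isClosed)
      (Set.iInter_subset Z ⟨q₀, hq₀⟩)
end

section
/- Let X, A, B be metric spaces, Φ_A : X → S(A), Φ_B : Gr(Φ_A) → S(B) with Φ_B lower semi-continuous, and let f : Gr(Φ_B) → ℝ̄ be lower semi-continuous. Then the worst-loss function f^♯(x,a) = sup_{b ∈ Φ_B(x,a)} f(x,a,b) is lower semi-continuous on Gr(Φ_A). -/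
open Filter Topology

/-- Theorem 3.1: if `Φ_B` is a lower semicontinuous set-valued mapping on `Gr(Φ_A)` and
`f` is lower semicontinuous on `Gr(Φ_B)`, then the worst-loss function
`f♯ (x, a) = ⨆ b ∈ Φ_B x a, f (x, a, b)` is lower semicontinuous on `Gr(Φ_A)`. -/
theorem stmt6 {X A B : Type*} [MetricSpace X] [MetricSpace A] [MetricSpace B]
    (ΦA : X → Set A) (hA : ∀ x, (ΦA x).Nonempty)
    (ΦB : X → A → Set B) (hB : ∀ x, ∀ a ∈ ΦA x, (ΦB x a).Nonempty)
    (hBlsc : ∀ p : X × A, p.2 ∈ ΦA p.1 →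
      ∀ ps : ℕ → X × A, (∀ n, (ps n).2 ∈ ΦA (ps n).1) →
        Tendsto ps atTop (𝓝 p) →
        ∀ b ∈ ΦB p.1 p.2, ∃ bs : ℕ → B,
          (∀ n, bs n ∈ ΦB (ps n).1 (ps n).2) ∧ MapClusterPt b atTop bs)
    (f : X × A × B → EReal)
    (hf : LowerSemicontinuousOn f
      {q : X × A × B | q.2.1 ∈ ΦA q.1 ∧ q.2.2 ∈ ΦB q.1 q.2.1}) :
    LowerSemicontinuousOn (fun p : X × A => ⨆ b ∈ ΦB p.1 p.2, f (p.1, p.2, b))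
      {p : X × A | p.2 ∈ ΦA p.1} := by
  intro p hp y hy
  simp only [lt_iSup_iff] at hy
  obtain ⟨b, hbmem, hyb⟩ := hy
  by_contra hcon
  rw [Filter.not_eventually] at hcon
  have hfreq : ∃ᶠ q in 𝓝[{p : X × A | p.2 ∈ ΦA p.1}] p,
      (q.2 ∈ ΦA q.1 ∧ ¬ y < ⨆ b ∈ ΦB q.1 q.2, f (q.1, q.2, b)) := by
    refine hcon.mp (eventually_mem_nhdsWithin.mono ?_)
    intro q hq hq'
    exact ⟨hq, hq'⟩
  obtain ⟨ps, hps, hprop⟩ := Filter.exists_seq_forall_of_frequently hfreq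
  have hpsS : ∀ n, (ps n).2 ∈ ΦA (ps n).1 := fun n => (hprop n).1
  have hpsT : Tendsto ps atTop (𝓝 p) := hps.mono_right nhdsWithin_le_nhds
  obtain ⟨bs, hbs, hclus⟩ := hBlsc p hp ps hpsS hpsT b hbmem
  obtain ⟨U, hUle, hUtend⟩ := mapClusterPt_iff_ultrafilter.mp hclus
  have hptend : Tendsto (fun n => ((ps n).1, (ps n).2, bs n)) U
      (𝓝 (p.1, p.2, b)) := by
    have h1 : Tendsto (fun n => (ps n).1) U (𝓝 p.1) :=
      ((continuous_fst.tendsto p).comp (hpsT.mono_left hUle))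
    have h2 : Tendsto (fun n => (ps n).2) U (𝓝 p.2) :=
      ((continuous_snd.tendsto p).comp (hpsT.mono_left hUle))
    exact h1.prodMk_nhds (h2.prodMk_nhds hUtend)
  have hmemT : ∀ n, ((ps n).1, (ps n).2, bs n) ∈
      {q : X × A × B | q.2.1 ∈ ΦA q.1 ∧ q.2.2 ∈ ΦB q.1 q.2.1} :=
    fun n => ⟨hpsS n, hbs n⟩
  have htendW : Tendsto (fun n => ((ps n).1, (ps n).2, bs n)) U
      (𝓝[{q : X × A × B | q.2.1 ∈ ΦA q.1 ∧ q.2.2 ∈ ΦB q.1 q.2.1}] (p.1, p.2, b)) :=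
    tendsto_nhdsWithin_of_tendsto_nhds_of_eventually_within _ hptend
      (Eventually.of_forall hmemT)
  have hev : ∀ᶠ n in (U : Filter ℕ), y < f ((ps n).1, (ps n).2, bs n) :=
    htendW.eventually (hf (p.1, p.2, b) ⟨hp, hbmem⟩ y hyb)
  obtain ⟨n, hn⟩ := hev.exists
  have hle : f ((ps n).1, (ps n).2, bs n) ≤ ⨆ b ∈ ΦB (ps n).1 (ps n).2,
      f ((ps n).1, (ps n).2, b) := le_iSup₂_of_le (bs n) (hbs n) le_rfl
  exact (hprop n).2 (lt_of_lt_of_le hn hle)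
end

section
/- Let X, A, B be metric spaces, Φ_A : X → S(A), and Φ_B : Gr(Φ_A) → S(B) be A-lower semi-continuous. Suppose the swapped function f^{A↔B}(x,b,a) := f(x,a,b), defined on Gr(Φ_B^{A↔B}) where Gr(Φ_B^{A↔B}) = {(x,b,a) : (x,a,b) ∈ Gr(Φ_B)}, is K-inf-compact. Then the worst-loss function f^♯(x,a) = sup_{b ∈ Φ_B(x,a)} f(x,a,b) is K-inf-compact on Gr(Φ_A). -/
open Filter Topology

/-- Theorem 3.2: if `Φ_B` is `A`-lower semicontinuous and the swapped function
`f^{A↔B} (x, b, a) = f (x, a, b)` is `K`-inf-compact on `Gr(Φ_B^{A↔B})`, then the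
worst-loss function `f♯ (x, a) = ⨆ b ∈ Φ_B x a, f (x, a, b)` is `K`-inf-compact on
`Gr(Φ_A)`. -/
theorem stmt7 {X A B : Type*} [MetricSpace X] [MetricSpace A] [MetricSpace B]
    (ΦA : X → Set A) (hA : ∀ x, (ΦA x).Nonempty)
    (ΦB : X → A → Set B) (hB : ∀ x, ∀ a ∈ ΦA x, (ΦB x a).Nonempty)
    (hAlsc : ∀ (x : X) (xs : ℕ → X), Tendsto xs atTop (𝓝 x) →
      ∀ as : ℕ → A, (∀ n, as n ∈ ΦA (xs n)) →
        ∀ a ∈ ΦA x, ∀ b ∈ ΦB x a,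
          ∃ bs : ℕ → B, (∀ n, bs n ∈ ΦB (xs n) (as n)) ∧ MapClusterPt b atTop bs)
    (f : X × A × B → EReal)
    (hswap : ∀ C : Set (X × B), C.Nonempty → IsCompact C →
      C ⊆ {q : X × B | ∃ a ∈ ΦA q.1, q.2 ∈ ΦB q.1 a} →
      ∀ l : ℝ, IsCompact {r : (X × B) × A | r.1 ∈ C ∧ r.2 ∈ ΦA r.1.1 ∧
        r.1.2 ∈ ΦB r.1.1 r.2 ∧ f (r.1.1, r.2, r.1.2) ≤ (l : EReal)}) :
    ∀ C : Set X, C.Nonempty → IsCompact C →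
      ∀ l : ℝ, IsCompact {p : X × A | p.1 ∈ C ∧ p.2 ∈ ΦA p.1 ∧
        (⨆ b ∈ ΦB p.1 p.2, f (p.1, p.2, b)) ≤ (l : EReal)} := by
  intro C hCne hC l
  rw [isCompact_iff_isSeqCompact]
  intro p hp
  set xs : ℕ → X := fun n => (p n).1 with hxs_def
  set as : ℕ → A := fun n => (p n).2 with has_def
  have hxC : ∀ n, xs n ∈ C := fun n => (hp n).1
  have haA : ∀ n, as n ∈ ΦA (xs n) := fun n => (hp n).2.1
  have hfl : ∀ n, ∀ b ∈ ΦB (xs n) (as n), f (xs n, as n, b) ≤ (l : EReal) := by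
    intro n b hb
    exact le_trans (le_biSup (fun b => f (xs n, as n, b)) hb) (hp n).2.2
  -- Step 1: extract a subsequence of xs converging to some x ∈ C
  obtain ⟨x, hxmem, φ1, hφ1, hx1⟩ :=
    (isCompact_iff_isSeqCompact.mp hC) hxC
  -- Step 2: fixed point of Gr(ΦB) above x, and bs from A-lsc
  obtain ⟨a0, ha0⟩ := hA x
  obtain ⟨b0, hb0⟩ := hB x a0 ha0
  obtain ⟨bs, hbs, hbcl⟩ := hAlsc x (xs ∘ φ1) hx1 (as ∘ φ1)
    (fun n => haA (φ1 n)) a0 ha0 b0 hb0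
  obtain ⟨φ2, hφ2, hb2⟩ := TopologicalSpace.FirstCountableTopology.tendsto_subseq hbcl
  set ψ : ℕ → ℕ := fun n => φ1 (φ2 n) with hψ_def
  have hxψ : Tendsto (fun n => xs (ψ n)) atTop (𝓝 x) := hx1.comp hφ2.tendsto_atTop
  -- Step 3: the compact set C' in X × B
  set q : ℕ → X × B := fun n => (xs (ψ n), bs (φ2 n)) with hq_def
  have hqt : Tendsto q atTop (𝓝 (x, b0)) := hxψ.prodMk_nhds hb2
  have hC'comp : IsCompact (insert (x, b0) (Set.range q)) := hqt.isCompact_insert_range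
  have hC'sub : insert (x, b0) (Set.range q) ⊆
      {r : X × B | ∃ a ∈ ΦA r.1, r.2 ∈ ΦB r.1 a} := by
    rintro r (rfl | ⟨n, rfl⟩)
    · exact ⟨a0, ha0, hb0⟩
    · exact ⟨as (ψ n), haA (ψ n), hbs (φ2 n)⟩
  have hK := hswap _ ⟨_, Set.mem_insert _ _⟩ hC'comp hC'sub l
  -- Step 4: the sequence in K and a converging subsequence
  set r : ℕ → (X × B) × A := fun n => ((xs (ψ n), bs (φ2 n)), as (ψ n)) with hr_def
  have hrK : ∀ n, r n ∈ {r : (X × B) × A | r.1 ∈ insert (x, b0) (Set.range q) ∧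
      r.2 ∈ ΦA r.1.1 ∧ r.1.2 ∈ ΦB r.1.1 r.2 ∧ f (r.1.1, r.2, r.1.2) ≤ (l : EReal)} := by
    intro n
    exact ⟨Set.mem_insert_of_mem _ ⟨n, rfl⟩, haA (ψ n), hbs (φ2 n),
      hfl (ψ n) _ (hbs (φ2 n))⟩
  obtain ⟨r0, hr0K, φ3, hφ3, hr3⟩ := hK.tendsto_subseq hrK
  -- identify the limit components
  have hxσ : Tendsto (fun n => xs (ψ (φ3 n))) atTop (𝓝 x) := hxψ.comp hφ3.tendsto_atTop
  have haσ : Tendsto (fun n => as (ψ (φ3 n))) atTop (𝓝 r0.2) :=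
    ((continuous_snd.tendsto r0).comp hr3)
  have hx'σ : Tendsto (fun n => xs (ψ (φ3 n))) atTop (𝓝 r0.1.1) :=
    ((continuous_fst.comp continuous_fst).tendsto r0).comp hr3
  have hb'σ : Tendsto (fun n => bs (φ2 (φ3 n))) atTop (𝓝 r0.1.2) :=
    ((continuous_snd.comp continuous_fst).tendsto r0).comp hr3
  have hxeq : r0.1.1 = x := tendsto_nhds_unique hx'σ hxσ
  set a' : A := r0.2 with ha'_def
  have ha'A : a' ∈ ΦA x := by rw [← hxeq]; exact hr0K.2.1
  -- Step 5: show (x, a') is in the sublevel set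
  have hsup : (⨆ b ∈ ΦB x a', f (x, a', b)) ≤ (l : EReal) := by
    refine iSup₂_le fun b hb => ?_
    obtain ⟨bs', hbs', hbcl'⟩ := hAlsc x (fun n => xs (ψ (φ3 n))) hxσ
      (fun n => as (ψ (φ3 n))) (fun n => haA _) a' ha'A b hb
    obtain ⟨φ4, hφ4, hb4⟩ := TopologicalSpace.FirstCountableTopology.tendsto_subseq hbcl'
    set σ : ℕ → ℕ := fun n => ψ (φ3 (φ4 n)) with hσ_def
    have hxτ : Tendsto (fun n => xs (σ n)) atTop (𝓝 x) := hxσ.comp hφ4.tendsto_atTop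
    have haτ : Tendsto (fun n => as (σ n)) atTop (𝓝 a') := haσ.comp hφ4.tendsto_atTop
    set q' : ℕ → X × B := fun n => (xs (σ n), bs' (φ4 n)) with hq'_def
    have hq't : Tendsto q' atTop (𝓝 (x, b)) := hxτ.prodMk_nhds hb4
    have hC''comp : IsCompact (insert (x, b) (Set.range q')) := hq't.isCompact_insert_range
    have hC''sub : insert (x, b) (Set.range q') ⊆
        {r : X × B | ∃ a ∈ ΦA r.1, r.2 ∈ ΦB r.1 a} := by
      rintro r (rfl | ⟨n, rfl⟩)
      · exact ⟨a', ha'A, hb⟩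
      · exact ⟨as (σ n), haA (σ n), hbs' (φ4 n)⟩
    have hK'' := hswap _ ⟨_, Set.mem_insert _ _⟩ hC''comp hC''sub l
    set s : ℕ → (X × B) × A := fun n => ((xs (σ n), bs' (φ4 n)), as (σ n)) with hs_def
    have hsK : ∀ n, s n ∈ {r : (X × B) × A | r.1 ∈ insert (x, b) (Set.range q') ∧
        r.2 ∈ ΦA r.1.1 ∧ r.1.2 ∈ ΦB r.1.1 r.2 ∧ f (r.1.1, r.2, r.1.2) ≤ (l : EReal)} := by
      intro n
      exact ⟨Set.mem_insert_of_mem _ ⟨n, rfl⟩, haA (σ n), hbs' (φ4 n),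
        hfl (σ n) _ (hbs' (φ4 n))⟩
    have hst : Tendsto s atTop (𝓝 ((x, b), a')) := hq't.prodMk_nhds haτ
    have hmem : ((x, b), a') ∈ {r : (X × B) × A | r.1 ∈ insert (x, b) (Set.range q') ∧
        r.2 ∈ ΦA r.1.1 ∧ r.1.2 ∈ ΦB r.1.1 r.2 ∧ f (r.1.1, r.2, r.1.2) ≤ (l : EReal)} :=
      hK''.isClosed.mem_of_tendsto hst (Eventually.of_forall hsK)
    exact hmem.2.2.2
  refine ⟨(x, a'), ⟨hxmem, ha'A, hsup⟩, fun n => ψ (φ3 n), hφ1.comp (hφ2.comp hφ3), ?_⟩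
  have : (p ∘ fun n => ψ (φ3 n)) = fun n => (xs (ψ (φ3 n)), as (ψ (φ3 n))) :=
    funext fun n => rfl
  rw [this]
  exact hxσ.prodMk_nhds haσ
end

section
/- Under the hypotheses that Φ_B : Gr(Φ_A) → S(B) is A-lower semi-continuous and the swapped function f^{A↔B} is K-inf-compact on Gr(Φ_B^{A↔B}), the minimax function v^♯(x) = inf_{a ∈ Φ_A(x)} sup_{b ∈ Φ_B(x,a)} f(x,a,b) is lower semi-continuous on X, the infimum over a is attained for every x, and the set Φ_A*(x) = {a ∈ Φ_A(x) : sup_{b ∈ Φ_B(x,a)} f(x,a,b) = v^♯(x)} is compact whenever v^♯(x) < +∞. -/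
open Filter Topology

section stmt8aux

variable {X A B : Type*} [MetricSpace X] [MetricSpace A] [MetricSpace B]
variable {ΦA : X → Set A} {ΦB : X → A → Set B} {f : X × A × B → EReal}

/-- Core "closedness along sequences" consequence of K-inf-compactness of the swap. -/
private lemma stmt8_dstep
    (hswap : ∀ C : Set (X × B), C.Nonempty → IsCompact C →
      C ⊆ {q : X × B | ∃ a ∈ ΦA q.1, q.2 ∈ ΦB q.1 a} →
      ∀ l : ℝ, IsCompact {r : (X × B) × A | r.1 ∈ C ∧ r.2 ∈ ΦA r.1.1 ∧
        r.1.2 ∈ ΦB r.1.1 r.2 ∧ f (r.1.1, r.2, r.1.2) ≤ (l : EReal)})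
    (l : ℝ) {x : X} {b : B} (hxb : ∃ a ∈ ΦA x, b ∈ ΦB x a)
    {xs : ℕ → X} {bs : ℕ → B} {as : ℕ → A}
    (hxs : Tendsto xs atTop (𝓝 x)) (hbs : Tendsto bs atTop (𝓝 b))
    (hmem : ∀ n, as n ∈ ΦA (xs n) ∧ bs n ∈ ΦB (xs n) (as n) ∧
      f (xs n, as n, bs n) ≤ (l : EReal)) :
    ∃ a ∈ ΦA x, b ∈ ΦB x a ∧ f (x, a, b) ≤ (l : EReal) ∧
      ∃ φ : ℕ → ℕ, StrictMono φ ∧ Tendsto (as ∘ φ) atTop (𝓝 a) := by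
  have hten : Tendsto (fun n => (xs n, bs n)) atTop (𝓝 (x, b)) := hxs.prodMk_nhds hbs
  set C : Set (X × B) := insert (x, b) (Set.range fun n => (xs n, bs n)) with hC
  have hCc : IsCompact C := hten.isCompact_insert_range
  have hCne : C.Nonempty := ⟨(x, b), Set.mem_insert _ _⟩
  have hCsub : C ⊆ {q : X × B | ∃ a ∈ ΦA q.1, q.2 ∈ ΦB q.1 a} := by
    rintro q (rfl | ⟨n, rfl⟩)
    · exact hxb
    · exact ⟨as n, (hmem n).1, (hmem n).2.1⟩
  have hD := hswap C hCne hCc hCsub l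
  have hu : ∀ n, ((xs n, bs n), as n) ∈
      {r : (X × B) × A | r.1 ∈ C ∧ r.2 ∈ ΦA r.1.1 ∧
        r.1.2 ∈ ΦB r.1.1 r.2 ∧ f (r.1.1, r.2, r.1.2) ≤ (l : EReal)} := fun n =>
    ⟨Set.mem_insert_iff.2 (Or.inr ⟨n, rfl⟩), (hmem n).1, (hmem n).2.1, (hmem n).2.2⟩
  obtain ⟨r, hrD, φ, hφ, hrt⟩ := hD.tendsto_subseq hu
  obtain ⟨⟨x', b'⟩, a⟩ := r
  have h1 : Tendsto (fun k => (xs (φ k), bs (φ k))) atTop (𝓝 (x', b')) := by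
    have := (continuous_fst.tendsto _).comp hrt
    simpa [Function.comp_def] using this
  have h2 : Tendsto (fun k => (xs (φ k), bs (φ k))) atTop (𝓝 (x, b)) :=
    hten.comp hφ.tendsto_atTop
  have hr1 : (x', b') = (x, b) := tendsto_nhds_unique h1 h2
  obtain ⟨hx', hb'⟩ := Prod.mk.inj hr1
  subst hx'; subst hb'
  have hat : Tendsto (as ∘ φ) atTop (𝓝 a) := by
    have := (continuous_snd.tendsto _).comp hrt
    simpa [Function.comp_def] using this
  exact ⟨a, hrD.2.1, hrD.2.2.1, hrD.2.2.2, φ, hφ, hat⟩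


/-- Key lemma: along a convergent sequence with bounded worst-case values, a cluster
point of the actions exists, lies in `ΦA x`, and has worst-case value `≤ l`. -/
private lemma stmt8_key (hA : ∀ x, (ΦA x).Nonempty)
    (hB : ∀ x, ∀ a ∈ ΦA x, (ΦB x a).Nonempty)
    (hAlsc : ∀ (x : X) (xs : ℕ → X), Tendsto xs atTop (𝓝 x) →
      ∀ as : ℕ → A, (∀ n, as n ∈ ΦA (xs n)) →
        ∀ a ∈ ΦA x, ∀ b ∈ ΦB x a,
          ∃ bs : ℕ → B, (∀ n, bs n ∈ ΦB (xs n) (as n)) ∧ MapClusterPt b atTop bs)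
    (hswap : ∀ C : Set (X × B), C.Nonempty → IsCompact C →
      C ⊆ {q : X × B | ∃ a ∈ ΦA q.1, q.2 ∈ ΦB q.1 a} →
      ∀ l : ℝ, IsCompact {r : (X × B) × A | r.1 ∈ C ∧ r.2 ∈ ΦA r.1.1 ∧
        r.1.2 ∈ ΦB r.1.1 r.2 ∧ f (r.1.1, r.2, r.1.2) ≤ (l : EReal)})
    (l : ℝ) {x : X} {xs : ℕ → X} (hxs : Tendsto xs atTop (𝓝 x))
    {as : ℕ → A} (has : ∀ n, as n ∈ ΦA (xs n))
    (hg : ∀ n, (⨆ b ∈ ΦB (xs n) (as n), f (xs n, as n, b)) ≤ (l : EReal)) :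
    ∃ a ∈ ΦA x, (⨆ b ∈ ΦB x a, f (x, a, b)) ≤ (l : EReal) ∧
      ∃ φ : ℕ → ℕ, StrictMono φ ∧ Tendsto (as ∘ φ) atTop (𝓝 a) := by
  obtain ⟨a0, ha0⟩ := hA x
  obtain ⟨b0, hb0⟩ := hB x a0 ha0
  obtain ⟨bs, hbsm, hcl⟩ := hAlsc x xs hxs as has a0 ha0 b0 hb0
  obtain ⟨ψ, hψ, hbt⟩ := TopologicalSpace.FirstCountableTopology.tendsto_subseq hcl
  have hmem : ∀ k, as (ψ k) ∈ ΦA (xs (ψ k)) ∧ bs (ψ k) ∈ ΦB (xs (ψ k)) (as (ψ k)) ∧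
      f (xs (ψ k), as (ψ k), bs (ψ k)) ≤ (l : EReal) := fun k =>
    ⟨has _, hbsm _, le_trans (le_biSup (fun b => f (xs (ψ k), as (ψ k), b)) (hbsm _)) (hg _)⟩
  obtain ⟨a, haA, -, -, φ, hφ, hat⟩ :=
    stmt8_dstep hswap l ⟨a0, ha0, hb0⟩ (hxs.comp hψ.tendsto_atTop) hbt hmem
  refine ⟨a, haA, ?_, ψ ∘ φ, hψ.comp hφ, hat⟩
  refine iSup₂_le fun b hb => ?_
  have hxs2 : Tendsto (fun k => xs (ψ (φ k))) atTop (𝓝 x) :=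
    hxs.comp (hψ.comp hφ).tendsto_atTop
  have has2 : ∀ k, as (ψ (φ k)) ∈ ΦA (xs (ψ (φ k))) := fun k => has _
  obtain ⟨bs', hbs'm, hcl'⟩ := hAlsc x (fun k => xs (ψ (φ k))) hxs2
    (fun k => as (ψ (φ k))) has2 a haA b hb
  obtain ⟨τ, hτ, hbt'⟩ := TopologicalSpace.FirstCountableTopology.tendsto_subseq hcl'
  have hmem' : ∀ k, as (ψ (φ (τ k))) ∈ ΦA (xs (ψ (φ (τ k)))) ∧
      bs' (τ k) ∈ ΦB (xs (ψ (φ (τ k)))) (as (ψ (φ (τ k)))) ∧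
      f (xs (ψ (φ (τ k))), as (ψ (φ (τ k))), bs' (τ k)) ≤ (l : EReal) := fun k =>
    ⟨has _, hbs'm _, le_trans
      (le_biSup (fun b => f (xs (ψ (φ (τ k))), as (ψ (φ (τ k))), b)) (hbs'm _)) (hg _)⟩
  obtain ⟨a', ha'A, hb', hf', σ, hσ, hat'⟩ :=
    stmt8_dstep hswap l ⟨a, haA, hb⟩ (hxs2.comp hτ.tendsto_atTop) hbt' hmem'
  have haa : a' = a := by
    have h1 : Tendsto (fun k => as (ψ (φ (τ (σ k))))) atTop (𝓝 a) :=
      hat.comp (hτ.comp hσ).tendsto_atTop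
    exact tendsto_nhds_unique hat' h1
  rwa [haa] at hf'

private lemma stmt8_cpt (hA : ∀ x, (ΦA x).Nonempty)
    (hB : ∀ x, ∀ a ∈ ΦA x, (ΦB x a).Nonempty)
    (hAlsc : ∀ (x : X) (xs : ℕ → X), Tendsto xs atTop (𝓝 x) →
      ∀ as : ℕ → A, (∀ n, as n ∈ ΦA (xs n)) →
        ∀ a ∈ ΦA x, ∀ b ∈ ΦB x a,
          ∃ bs : ℕ → B, (∀ n, bs n ∈ ΦB (xs n) (as n)) ∧ MapClusterPt b atTop bs)
    (hswap : ∀ C : Set (X × B), C.Nonempty → IsCompact C →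
      C ⊆ {q : X × B | ∃ a ∈ ΦA q.1, q.2 ∈ ΦB q.1 a} →
      ∀ l : ℝ, IsCompact {r : (X × B) × A | r.1 ∈ C ∧ r.2 ∈ ΦA r.1.1 ∧
        r.1.2 ∈ ΦB r.1.1 r.2 ∧ f (r.1.1, r.2, r.1.2) ≤ (l : EReal)})
    (x : X) (l : ℝ) :
    IsCompact {a | a ∈ ΦA x ∧ (⨆ b ∈ ΦB x a, f (x, a, b)) ≤ (l : EReal)} := by
  apply IsSeqCompact.isCompact
  intro u hu
  obtain ⟨a, haA, hgl, φ, hφ, hat⟩ := stmt8_key hA hB hAlsc hswap l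
    (tendsto_const_nhds : Tendsto (fun _ : ℕ => x) atTop (𝓝 x))
    (fun n => (hu n).1) (fun n => (hu n).2)
  exact ⟨a, ⟨haA, hgl⟩, φ, hφ, hat⟩

end stmt8aux

/-- Theorem 3.3: if `Φ_B` is `A`-lower semicontinuous and the swapped function
`f^{A↔B}` is `K`-inf-compact on `Gr(Φ_B^{A↔B})`, then the minimax function
`v♯ x = ⨅ a ∈ Φ_A x, ⨆ b ∈ Φ_B x a, f (x, a, b)` is lower semicontinuous, the
infimum is attained, and the solution set `Φ_A* x` is compact whenever `v♯ x < +∞`. -/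
theorem stmt8 {X A B : Type*} [MetricSpace X] [MetricSpace A] [MetricSpace B]
    (ΦA : X → Set A) (hA : ∀ x, (ΦA x).Nonempty)
    (ΦB : X → A → Set B) (hB : ∀ x, ∀ a ∈ ΦA x, (ΦB x a).Nonempty)
    (hAlsc : ∀ (x : X) (xs : ℕ → X), Tendsto xs atTop (𝓝 x) →
      ∀ as : ℕ → A, (∀ n, as n ∈ ΦA (xs n)) →
        ∀ a ∈ ΦA x, ∀ b ∈ ΦB x a,
          ∃ bs : ℕ → B, (∀ n, bs n ∈ ΦB (xs n) (as n)) ∧ MapClusterPt b atTop bs)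
    (f : X × A × B → EReal)
    (hswap : ∀ C : Set (X × B), C.Nonempty → IsCompact C →
      C ⊆ {q : X × B | ∃ a ∈ ΦA q.1, q.2 ∈ ΦB q.1 a} →
      ∀ l : ℝ, IsCompact {r : (X × B) × A | r.1 ∈ C ∧ r.2 ∈ ΦA r.1.1 ∧
        r.1.2 ∈ ΦB r.1.1 r.2 ∧ f (r.1.1, r.2, r.1.2) ≤ (l : EReal)}) :
    LowerSemicontinuous (fun x => ⨅ a ∈ ΦA x, ⨆ b ∈ ΦB x a, f (x, a, b)) ∧
    (∀ x : X, ∃ a ∈ ΦA x, (⨆ b ∈ ΦB x a, f (x, a, b)) =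
      ⨅ a' ∈ ΦA x, ⨆ b ∈ ΦB x a', f (x, a', b)) ∧
    (∀ x : X, (⨅ a ∈ ΦA x, ⨆ b ∈ ΦB x a, f (x, a, b)) < ⊤ →
      IsCompact {a | a ∈ ΦA x ∧ (⨆ b ∈ ΦB x a, f (x, a, b)) =
        ⨅ a' ∈ ΦA x, ⨆ b ∈ ΦB x a', f (x, a', b)}) := by
  have hvle : ∀ x : X, ∀ a ∈ ΦA x,
      (⨅ a' ∈ ΦA x, ⨆ b ∈ ΦB x a', f (x, a', b)) ≤ ⨆ b ∈ ΦB x a, f (x, a, b) :=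
    fun x a ha => iInf₂_le a ha
  have hsub : ∀ (x : X) (l : ℝ),
      IsCompact {a | a ∈ ΦA x ∧ (⨆ b ∈ ΦB x a, f (x, a, b)) ≤ (l : EReal)} :=
    fun x l => stmt8_cpt hA hB hAlsc hswap x l
  have hexlt : ∀ (x : X) (l : ℝ),
      (⨅ a' ∈ ΦA x, ⨆ b ∈ ΦB x a', f (x, a', b)) < (l : EReal) →
      ∃ a ∈ ΦA x, (⨆ b ∈ ΦB x a, f (x, a, b)) ≤ (l : EReal) := by
    intro x l hl
    by_contra hcon
    push_neg at hcon
    exact absurd (le_iInf₂ fun a ha => (hcon a ha).le) (not_le.2 hl)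
  refine ⟨?_, ?_, ?_⟩
  · -- lower semicontinuity
    intro x y hy
    by_contra hcon
    rw [Filter.not_eventually] at hcon
    obtain ⟨xs, hxs, hxsv⟩ := exists_seq_forall_of_frequently hcon
    obtain ⟨l, hyl, hlv⟩ := EReal.exists_between_coe_real hy
    have hex : ∀ n, ∃ a ∈ ΦA (xs n), (⨆ b ∈ ΦB (xs n) a, f (xs n, a, b)) ≤ (l : EReal) :=
      fun n => hexlt (xs n) l (lt_of_le_of_lt (not_lt.1 (hxsv n)) hyl)
    choose as has hgl using hex
    obtain ⟨a, haA, hgle, -⟩ := stmt8_key hA hB hAlsc hswap l hxs has hgl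
    exact absurd ((hvle x a haA).trans hgle) (not_le.2 hlv)
  · -- attainment of the infimum
    intro x
    by_cases hv : (⨅ a' ∈ ΦA x, ⨆ b ∈ ΦB x a', f (x, a', b)) = ⊤
    · obtain ⟨a, ha⟩ := hA x
      refine ⟨a, ha, ?_⟩
      have h1 : (⊤ : EReal) ≤ ⨆ b ∈ ΦB x a, f (x, a, b) := hv ▸ hvle x a ha
      rw [top_le_iff.1 h1, hv]
    · have hvlt : (⨅ a' ∈ ΦA x, ⨆ b ∈ ΦB x a', f (x, a', b)) < ⊤ := lt_top_iff_ne_top.2 hv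
      obtain ⟨l0, hl0, -⟩ := EReal.exists_between_coe_real hvlt
      have hι : Nonempty {l : ℝ // (⨅ a' ∈ ΦA x, ⨆ b ∈ ΦB x a', f (x, a', b)) < (l : EReal)} :=
        ⟨⟨l0, hl0⟩⟩
      set T : {l : ℝ // (⨅ a' ∈ ΦA x, ⨆ b ∈ ΦB x a', f (x, a', b)) < (l : EReal)} → Set A :=
        fun l => {a | a ∈ ΦA x ∧ (⨆ b ∈ ΦB x a, f (x, a, b)) ≤ ((l : ℝ) : EReal)} with hT
      have hTne : ∀ l, (T l).Nonempty := by
        rintro ⟨l, hl⟩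
        obtain ⟨a, ha, hga⟩ := hexlt x l hl
        exact ⟨a, ha, hga⟩
      have hTc : ∀ l, IsCompact (T l) := fun l => hsub x l
      have hTd : Directed (· ⊇ ·) T := by
        rintro ⟨l1, hl1⟩ ⟨l2, hl2⟩
        refine ⟨⟨min l1 l2, lt_min hl1 hl2⟩, fun a ha => ⟨ha.1, ha.2.trans ?_⟩,
          fun a ha => ⟨ha.1, ha.2.trans ?_⟩⟩
        · exact_mod_cast min_le_left l1 l2
        · exact_mod_cast min_le_right l1 l2
      obtain ⟨a, ha⟩ := IsCompact.nonempty_iInter_of_directed_nonempty_isCompact_isClosed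
        T hTd hTne hTc (fun l => (hTc l).isClosed)
      simp only [Set.mem_iInter] at ha
      have haA : a ∈ ΦA x := (ha ⟨l0, hl0⟩).1
      refine ⟨a, haA, ?_⟩
      have hle : (⨆ b ∈ ΦB x a, f (x, a, b)) ≤ ⨅ a' ∈ ΦA x, ⨆ b ∈ ΦB x a', f (x, a', b) := by
        by_contra hcon
        obtain ⟨r, hr1, hr2⟩ := EReal.exists_between_coe_real (not_le.1 hcon)
        exact absurd (ha ⟨r, hr1⟩).2 (not_le.2 hr2)
      exact le_antisymm hle (hvle x a haA)
  · -- compactness of the argmin set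
    intro x hvlt
    obtain ⟨l0, hl0, -⟩ := EReal.exists_between_coe_real hvlt
    have hargmin : {a | a ∈ ΦA x ∧ (⨆ b ∈ ΦB x a, f (x, a, b)) =
        ⨅ a' ∈ ΦA x, ⨆ b ∈ ΦB x a', f (x, a', b)} =
        ⋂ l : {l : ℝ // (⨅ a' ∈ ΦA x, ⨆ b ∈ ΦB x a', f (x, a', b)) < (l : EReal)},
          {a | a ∈ ΦA x ∧ (⨆ b ∈ ΦB x a, f (x, a, b)) ≤ ((l : ℝ) : EReal)} := by
      ext a
      simp only [Set.mem_iInter, Set.mem_setOf_eq]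
      constructor
      · rintro ⟨h1, h2⟩ l
        exact ⟨h1, (lt_of_le_of_lt h2.le l.2).le⟩
      · intro h
        have h1 : a ∈ ΦA x := (h ⟨l0, hl0⟩).1
        refine ⟨h1, ?_⟩
        have hle : (⨆ b ∈ ΦB x a, f (x, a, b)) ≤
            ⨅ a' ∈ ΦA x, ⨆ b ∈ ΦB x a', f (x, a', b) := by
          by_contra hcon
          obtain ⟨r, hr1, hr2⟩ := EReal.exists_between_coe_real (not_le.1 hcon)
          exact absurd (h ⟨r, hr1⟩).2 (not_le.2 hr2)
        exact le_antisymm hle (hvle x a h1)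
    rw [hargmin]
    exact IsCompact.of_isClosed_subset (hsub x l0)
      (isClosed_iInter fun l => (hsub x l).isClosed)
      (Set.iInter_subset _ (⟨l0, hl0⟩ : {l : ℝ // (⨅ a' ∈ ΦA x, ⨆ b ∈ ΦB x a', f (x, a', b)) < (l : EReal)}))
end

section
/- Let X, A, B be metric spaces, Φ_A : X → S(A) lower semi-continuous, and f : Gr(Φ_B) → ℝ̄ K-sup-compact on Gr(Φ_B) (i.e., −f is K-inf-compact). Then the minimax function v^♯(x) = inf_{a ∈ Φ_A(x)} sup_{b ∈ Φ_B(x,a)} f(x,a,b) is upper semi-continuous on X, and the suprema over b are attained. -/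
open Filter Topology

private lemma exists_real_seq (s : EReal) (hs : ⊥ < s) :
    ∃ l : ℕ → ℝ, Monotone l ∧ (∀ n, (l n : EReal) < s) ∧
      ∀ c : ℝ, (c : EReal) < s → ∃ n, c ≤ l n := by
  induction s with
  | bot => exact absurd hs (lt_irrefl _)
  | coe r =>
      refine ⟨fun n => r - 1 / (n + 1), ?_, ?_, ?_⟩
      · intro m n hmn
        have : (1 : ℝ) / (n + 1) ≤ 1 / (m + 1) := by
          apply one_div_le_one_div_of_le
          · positivity
          · exact_mod_cast Nat.succ_le_succ hmn
        linarith
      · intro n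
        have h1 : (0:ℝ) < 1 / (n + 1) := by positivity
        exact_mod_cast (by linarith : r - 1 / ((n:ℝ) + 1) < r)
      · intro c hc
        have hc' : c < r := by exact_mod_cast hc
        obtain ⟨n, hn⟩ := exists_nat_one_div_lt (by linarith : (0:ℝ) < r - c)
        exact ⟨n, by linarith⟩
  | top =>
      refine ⟨fun n => n, fun m n hmn => Nat.cast_le.mpr hmn, fun n => EReal.coe_lt_top _,
        fun c _ => ?_⟩
      · obtain ⟨n, hn⟩ := exists_nat_ge c; exact ⟨n, hn⟩

private lemma sup_attained {X A B : Type*} [MetricSpace B]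
    (ΦB : X → A → Set B) (f : X × A × B → EReal) (x : X) (a : A)
    (hne : (ΦB x a).Nonempty)
    (hc : ∀ l : ℝ, IsCompact {b : B | b ∈ ΦB x a ∧ (l : EReal) ≤ f (x, a, b)}) :
    ∃ b ∈ ΦB x a, f (x, a, b) = ⨆ b' ∈ ΦB x a, f (x, a, b') := by
  set s := ⨆ b' ∈ ΦB x a, f (x, a, b') with hsdef
  rcases eq_or_lt_of_le (bot_le : ⊥ ≤ s) with hbot | hs
  · obtain ⟨b, hb⟩ := hne
    refine ⟨b, hb, le_antisymm
      (le_iSup₂_of_le (f := fun b' (_ : b' ∈ ΦB x a) => f (x, a, b')) b hb le_rfl)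
      (hbot ▸ bot_le)⟩
  · obtain ⟨l, hlmono, hlt, hdense⟩ := exists_real_seq s hs
    set t : ℕ → Set B := fun n => {b : B | b ∈ ΦB x a ∧ (l n : EReal) ≤ f (x, a, b)}
      with htdef
    have htsub : ∀ n, t (n + 1) ⊆ t n := by
      intro n b hb
      exact ⟨hb.1, le_trans (EReal.coe_le_coe_iff.2 (hlmono (Nat.le_succ n))) hb.2⟩
    have htne : ∀ n, (t n).Nonempty := by
      intro n
      have := hlt n
      rw [hsdef] at this
      simp only [lt_iSup_iff] at this
      obtain ⟨b, hb, hfb⟩ := this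
      exact ⟨b, hb, hfb.le⟩
    obtain ⟨b, hb⟩ := IsCompact.nonempty_iInter_of_sequence_nonempty_isCompact_isClosed
      t htsub htne (hc (l 0)) (fun n => (hc (l n)).isClosed)
    have hbmem : ∀ n, b ∈ t n := fun n => Set.mem_iInter.1 hb n
    refine ⟨b, (hbmem 0).1, le_antisymm (le_iSup₂_of_le b (hbmem 0).1 le_rfl) ?_⟩
    refine le_of_forall_lt fun c hc' => ?_
    obtain ⟨r, hcr, hrs⟩ := EReal.exists_between_coe_real hc'
    obtain ⟨n, hn⟩ := hdense r hrs
    calc c < (r : EReal) := hcr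
    _ ≤ (l n : EReal) := EReal.coe_le_coe_iff.2 hn
    _ ≤ f (x, a, b) := (hbmem n).2

/-- Theorem 3.4: if `Φ_A` is lower semicontinuous and `f` is `K`-sup-compact on
`Gr(Φ_B)`, then the minimax function `v♯` is upper semicontinuous on `X` and the
suprema over `b` are attained. -/
theorem stmt9 {X A B : Type*} [MetricSpace X] [MetricSpace A] [MetricSpace B]
    (ΦA : X → Set A) (hA : ∀ x, (ΦA x).Nonempty)
    (ΦB : X → A → Set B) (hB : ∀ x, ∀ a ∈ ΦA x, (ΦB x a).Nonempty)
    (hAlscmap : ∀ (x : X) (xs : ℕ → X), Tendsto xs atTop (𝓝 x) →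
      ∀ a ∈ ΦA x, ∃ as : ℕ → A, (∀ n, as n ∈ ΦA (xs n)) ∧ MapClusterPt a atTop as)
    (f : X × A × B → EReal)
    (hsup : ∀ C : Set (X × A), C.Nonempty → IsCompact C →
      C ⊆ {p : X × A | p.2 ∈ ΦA p.1} →
      ∀ l : ℝ, IsCompact {q : (X × A) × B | q.1 ∈ C ∧ q.2 ∈ ΦB q.1.1 q.1.2 ∧
        (l : EReal) ≤ f (q.1.1, q.1.2, q.2)}) :
    UpperSemicontinuous (fun x => ⨅ a ∈ ΦA x, ⨆ b ∈ ΦB x a, f (x, a, b)) ∧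
    (∀ x : X, ∀ a ∈ ΦA x, ∃ b ∈ ΦB x a,
      f (x, a, b) = ⨆ b' ∈ ΦB x a, f (x, a, b')) := by
  -- compactness of level sets of b ↦ f (x, a, b)
  have hlevel : ∀ (x : X) (a : A), a ∈ ΦA x → ∀ l : ℝ,
      IsCompact {b : B | b ∈ ΦB x a ∧ (l : EReal) ≤ f (x, a, b)} := by
    intro x a ha l
    have hK := hsup {(x, a)} ⟨(x, a), rfl⟩ isCompact_singleton
      (by intro p hp; rw [Set.mem_singleton_iff] at hp; subst hp; exact ha) l
    have himg : {b : B | b ∈ ΦB x a ∧ (l : EReal) ≤ f (x, a, b)} =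
        Prod.snd '' {q : (X × A) × B | q.1 ∈ ({(x, a)} : Set (X × A)) ∧
          q.2 ∈ ΦB q.1.1 q.1.2 ∧ (l : EReal) ≤ f (q.1.1, q.1.2, q.2)} := by
      ext b
      constructor
      · rintro ⟨hb1, hb2⟩
        exact ⟨((x, a), b), ⟨rfl, hb1, hb2⟩, rfl⟩
      · rintro ⟨⟨⟨x', a'⟩, b'⟩, ⟨hq1, hq2, hq3⟩, rfl⟩
        rw [Set.mem_singleton_iff, Prod.mk.injEq] at hq1
        obtain ⟨rfl, rfl⟩ := hq1
        exact ⟨hq2, hq3⟩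
    rw [himg]
    exact hK.image continuous_snd
  constructor
  · -- upper semicontinuity
    intro x y hy
    by_contra hcon
    rw [Filter.not_eventually] at hcon
    obtain ⟨xs, hxs, hxsy⟩ := Filter.exists_seq_forall_of_frequently hcon
    simp only [not_lt] at hxsy
    simp only [iInf_lt_iff] at hy
    obtain ⟨a, ha, haw⟩ := hy
    obtain ⟨as, has, hclus⟩ := hAlscmap x xs hxs a ha
    obtain ⟨φ, hφ, hφt⟩ := TopologicalSpace.FirstCountableTopology.tendsto_subseq hclus
    obtain ⟨l, hl1, hl2⟩ := EReal.exists_between_coe_real haw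
    -- choose b's with large values
    have hbig : ∀ n, ∃ b ∈ ΦB (xs (φ n)) (as (φ n)),
        (l : EReal) < f (xs (φ n), as (φ n), b) := by
      intro n
      have h1 : y ≤ ⨅ a' ∈ ΦA (xs (φ n)), ⨆ b ∈ ΦB (xs (φ n)) a', f (xs (φ n), a', b) :=
        hxsy (φ n)
      have h2 : (l : EReal) < ⨆ b ∈ ΦB (xs (φ n)) (as (φ n)), f (xs (φ n), as (φ n), b) :=
        lt_of_lt_of_le hl2 (h1.trans (iInf₂_le (as (φ n)) (has (φ n))))
      simp only [lt_iSup_iff] at h2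
      obtain ⟨b, hb, hfb⟩ := h2
      exact ⟨b, hb, hfb⟩
    choose bs hbs1 hbs2 using hbig
    set u : ℕ → X × A := fun n => (xs (φ n), as (φ n)) with hudef
    have hu : Tendsto u atTop (𝓝 (x, a)) :=
      (hxs.comp hφ.tendsto_atTop).prodMk_nhds hφt
    set C : Set (X × A) := insert (x, a) (Set.range u) with hCdef
    have hCc : IsCompact C := hu.isCompact_insert_range
    have hCgr : C ⊆ {p : X × A | p.2 ∈ ΦA p.1} := by
      rintro p hp
      rcases Set.mem_insert_iff.1 hp with rfl | ⟨n, rfl⟩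
      · exact ha
      · exact has (φ n)
    have hK := hsup C ⟨(x, a), Set.mem_insert _ _⟩ hCc hCgr l
    set q : ℕ → (X × A) × B := fun n => (u n, bs n) with hqdef
    have hqmem : ∀ n, q n ∈ {q : (X × A) × B | q.1 ∈ C ∧ q.2 ∈ ΦB q.1.1 q.1.2 ∧
        (l : EReal) ≤ f (q.1.1, q.1.2, q.2)} := by
      intro n
      exact ⟨Set.mem_insert_of_mem _ ⟨n, rfl⟩, hbs1 n, (hbs2 n).le⟩
    obtain ⟨q₀, hq₀K, ψ, hψ, hψt⟩ := hK.tendsto_subseq hqmem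
    have hfst : Tendsto (fun n => (q (ψ n)).1) atTop (𝓝 q₀.1) :=
      (continuous_fst.tendsto _).comp hψt
    have hfst' : Tendsto (fun n => (q (ψ n)).1) atTop (𝓝 (x, a)) :=
      hu.comp hψ.tendsto_atTop
    have hq1 : q₀.1 = (x, a) := tendsto_nhds_unique hfst hfst'
    obtain ⟨-, hq₀2, hq₀3⟩ := hq₀K
    rw [hq1] at hq₀2 hq₀3
    have : f (x, a, q₀.2) ≤ ⨆ b ∈ ΦB x a, f (x, a, b) := le_iSup₂_of_le q₀.2 hq₀2 le_rfl
    exact absurd hq₀3 (not_le.2 (this.trans_lt hl1))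
  · intro x a ha
    exact sup_attained ΦB f x a (hB x a ha) (hlevel x a ha)
end

section
/- Let X, A, B be metric spaces, Φ_A : X → S(A) lower semi-continuous, Φ_B : Gr(Φ_A) → S(B) A-lower semi-continuous, f : Gr(Φ_B) → ℝ real-valued with f K-sup-compact on Gr(Φ_B) and f^{A↔B} K-inf-compact on Gr(Φ_B^{A↔B}). Then: (1) the worst-loss function f^♯ and the minimax function v^♯ are continuous; (2) the infimum in v^♯(x) = inf_{a ∈ Φ_A(x)} f^♯(x,a) is attained and the solution multifunction Φ_A* : X → S(A) is upper semi-continuous and compact-valued; (3) the suprema defining f^♯ are attained and the solution multifunction Φ_B* is upper semi-continuous and compact-valued. -/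
open Filter Topology

noncomputable section

variable {X A B : Type*} [MetricSpace X] [MetricSpace A] [MetricSpace B]

/-- The worst-loss function `f♯ (x, a) = ⨆ b ∈ Φ_B x a, f (x, a, b)`. -/
def fSharp (ΦB : X → A → Set B) (f : X × A × B → ℝ) (p : X × A) : EReal :=
  ⨆ b ∈ ΦB p.1 p.2, (f (p.1, p.2, b) : EReal)

/-- The minimax function `v♯ x = ⨅ a ∈ Φ_A x, f♯ (x, a)`. -/
def vSharp (ΦA : X → Set A) (ΦB : X → A → Set B) (f : X × A × B → ℝ) (x : X) : EReal :=
  ⨅ a ∈ ΦA x, fSharp ΦB f (x, a)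

/-- The solution multifunction `Φ_A* x = {a ∈ Φ_A x : f♯ (x, a) = v♯ x}`. -/
def ΦAstar (ΦA : X → Set A) (ΦB : X → A → Set B) (f : X × A × B → ℝ) (x : X) : Set A :=
  {a | a ∈ ΦA x ∧ fSharp ΦB f (x, a) = vSharp ΦA ΦB f x}

/-- The solution multifunction `Φ_B* (x, a) = {b ∈ Φ_B x a : f (x, a, b) = f♯ (x, a)}`. -/
def ΦBstar (ΦB : X → A → Set B) (f : X × A × B → ℝ) (p : X × A) : Set B :=
  {b | b ∈ ΦB p.1 p.2 ∧ (f (p.1, p.2, b) : EReal) = fSharp ΦB f p}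

set_option linter.unusedSectionVars false
set_option linter.unusedTactic false
set_option maxHeartbeats 1000000

namespace Stmt10Aux

/-- Real-valued version of the worst-loss function. -/
def gAux (ΦB : X → A → Set B) (f : X × A × B → ℝ) (p : X × A) : ℝ :=
  (fSharp ΦB f p).toReal

/-- Real-valued version of the minimax function. -/
def wAux (ΦA : X → Set A) (ΦB : X → A → Set B) (f : X × A × B → ℝ) (x : X) : ℝ :=
  (vSharp ΦA ΦB f x).toReal

section Main

variable {ΦA : X → Set A} {ΦB : X → A → Set B} {f : X × A × B → ℝ}
variable (hA : ∀ x, (ΦA x).Nonempty)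
variable (hB : ∀ x, ∀ a ∈ ΦA x, (ΦB x a).Nonempty)
variable (hAlscmap : ∀ (x : X) (xs : ℕ → X), Tendsto xs atTop (𝓝 x) →
      ∀ a ∈ ΦA x, ∃ as : ℕ → A, (∀ n, as n ∈ ΦA (xs n)) ∧ MapClusterPt a atTop as)
variable (hAlscB : ∀ (x : X) (xs : ℕ → X), Tendsto xs atTop (𝓝 x) →
      ∀ as : ℕ → A, (∀ n, as n ∈ ΦA (xs n)) →
        ∀ a ∈ ΦA x, ∀ b ∈ ΦB x a,
          ∃ bs : ℕ → B, (∀ n, bs n ∈ ΦB (xs n) (as n)) ∧ MapClusterPt b atTop bs)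
variable (hsup : ∀ C : Set (X × A), C.Nonempty → IsCompact C →
      C ⊆ {p : X × A | p.2 ∈ ΦA p.1} →
      ∀ l : ℝ, IsCompact {q : (X × A) × B | q.1 ∈ C ∧ q.2 ∈ ΦB q.1.1 q.1.2 ∧
        l ≤ f (q.1.1, q.1.2, q.2)})
variable (hswap : ∀ C : Set (X × B), C.Nonempty → IsCompact C →
      C ⊆ {q : X × B | ∃ a ∈ ΦA q.1, q.2 ∈ ΦB q.1 a} →
      ∀ l : ℝ, IsCompact {r : (X × B) × A | r.1 ∈ C ∧ r.2 ∈ ΦA r.1.1 ∧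
        r.1.2 ∈ ΦB r.1.1 r.2 ∧ f (r.1.1, r.2, r.1.2) ≤ l})

include hA hB hAlscmap hAlscB hsup hswap

/-- The supremum in the definition of `f♯` is attained, and `f♯` is real-valued on the graph. -/
theorem key_g (p : X × A) (hp : p.2 ∈ ΦA p.1) :
    (∃ b ∈ ΦB p.1 p.2, f (p.1, p.2, b) = gAux ΦB f p) ∧
    (∀ b ∈ ΦB p.1 p.2, f (p.1, p.2, b) ≤ gAux ΦB f p) ∧
    fSharp ΦB f p = (gAux ΦB f p : EReal) := by
  obtain ⟨x, a⟩ := p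
  simp only at hp ⊢
  -- compactness of superlevel sets within `ΦB x a`
  have hKcpt : ∀ l : ℝ, IsCompact {b | b ∈ ΦB x a ∧ l ≤ f (x, a, b)} := by
    intro l
    have hS := hsup {(x, a)} (Set.singleton_nonempty _) isCompact_singleton
      (by rintro q hq; rcases hq with rfl; exact hp) l
    have himg : {b | b ∈ ΦB x a ∧ l ≤ f (x, a, b)} =
        Prod.snd '' {q : (X × A) × B | q.1 ∈ ({(x, a)} : Set (X × A)) ∧
          q.2 ∈ ΦB q.1.1 q.1.2 ∧ l ≤ f (q.1.1, q.1.2, q.2)} := by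
      ext b
      constructor
      · rintro ⟨hb, hf⟩
        exact ⟨((x, a), b), ⟨rfl, hb, hf⟩, rfl⟩
      · rintro ⟨⟨q1, b'⟩, ⟨hq1, hb', hf'⟩, rfl⟩
        rcases hq1 with rfl
        exact ⟨hb', hf'⟩
    rw [himg]
    exact hS.image continuous_snd
  -- the values of `f` on `ΦB x a` are bounded above
  have hbdd : ∃ M : ℝ, ∀ b ∈ ΦB x a, f (x, a, b) ≤ M := by
    by_contra hM
    push_neg at hM
    have hne : ∀ n : ℕ, {b | b ∈ ΦB x a ∧ (n : ℝ) ≤ f (x, a, b)}.Nonempty := by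
      intro n
      obtain ⟨b, hb, hf⟩ := hM n
      exact ⟨b, hb, hf.le⟩
    obtain ⟨b, hb⟩ := IsCompact.nonempty_iInter_of_sequence_nonempty_isCompact_isClosed
      (fun n => {b | b ∈ ΦB x a ∧ (n : ℝ) ≤ f (x, a, b)})
      (fun n b hb => ⟨hb.1, le_trans (by exact_mod_cast Nat.le_succ n) hb.2⟩)
      hne (by simpa using hKcpt ((0:ℕ):ℝ)) (fun n => (hKcpt (n : ℝ)).isClosed)
    obtain ⟨n, hn⟩ := exists_nat_gt (f (x, a, b))
    have := (Set.mem_iInter.1 hb n).2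
    linarith
  obtain ⟨M, hM⟩ := hbdd
  have hne0 : (ΦB x a).Nonempty := hB x a hp
  set V := (fun b => f (x, a, b)) '' ΦB x a with hV
  have hVne : V.Nonempty := hne0.image _
  have hVbdd : BddAbove V := ⟨M, by rintro v ⟨b, hb, rfl⟩; exact hM b hb⟩
  set s := sSup V with hs
  have hle : ∀ b ∈ ΦB x a, f (x, a, b) ≤ s := fun b hb => le_csSup hVbdd ⟨b, hb, rfl⟩
  -- attainment of the supremum via nested compact sets
  have hnes : ∀ n : ℕ, {b | b ∈ ΦB x a ∧ s - 1 / (n + 1) ≤ f (x, a, b)}.Nonempty := by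
    intro n
    have h1 : s - 1 / ((n : ℝ) + 1) < s := by
      have : (0 : ℝ) < 1 / ((n : ℝ) + 1) := by positivity
      linarith
    obtain ⟨v, hvV, hv⟩ := exists_lt_of_lt_csSup hVne h1
    obtain ⟨b, hb, rfl⟩ := hvV
    exact ⟨b, hb, hv.le⟩
  obtain ⟨b0, hb0⟩ := IsCompact.nonempty_iInter_of_sequence_nonempty_isCompact_isClosed
    (fun n => {b | b ∈ ΦB x a ∧ s - 1 / (n + 1) ≤ f (x, a, b)})
    (fun n b hb => by
      refine ⟨hb.1, le_trans (by
        have h2 : (1 : ℝ) / (n + 1 + 1) ≤ 1 / (n + 1) := by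
          apply one_div_le_one_div_of_le <;> push_cast <;> linarith [Nat.cast_nonneg (α := ℝ) n]
        push_cast
        linarith) hb.2⟩)
    hnes (hKcpt _) (fun n => (hKcpt _).isClosed)
  have hb0mem : b0 ∈ ΦB x a := (Set.mem_iInter.1 hb0 0).1
  have hb0f : s ≤ f (x, a, b0) := by
    apply le_of_forall_pos_le_add
    intro ε hε
    obtain ⟨n, hn⟩ := exists_nat_one_div_lt hε
    have := (Set.mem_iInter.1 hb0 n).2
    have hpc : s - 1 / ((n : ℝ) + 1) ≤ f (x, a, b0) := by exact_mod_cast this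
    linarith
  have hmax : ∀ b ∈ ΦB x a, f (x, a, b) ≤ f (x, a, b0) := fun b hb =>
    le_trans (hle b hb) hb0f
  have hfs : fSharp ΦB f (x, a) = (f (x, a, b0) : EReal) := by
    apply le_antisymm
    · exact iSup₂_le fun b hb => EReal.coe_le_coe_iff.2 (hmax b hb)
    · exact le_iSup₂ (f := fun b _ => (f (x, a, b) : EReal)) b0 hb0mem
  have hg : gAux ΦB f (x, a) = f (x, a, b0) := by
    rw [gAux, hfs, EReal.toReal_coe]
  refine ⟨⟨b0, hb0mem, hg.symm⟩, fun b hb => ?_, by rw [hfs, hg]⟩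
  rw [hg]
  exact hmax b hb

/-- `g` is upper semicontinuous along graph sequences. -/
theorem g_usc (u : ℕ → X × A) (p : X × A) (hu : ∀ n, (u n).2 ∈ ΦA (u n).1)
    (hp : p.2 ∈ ΦA p.1) (ht : Tendsto u atTop (𝓝 p)) :
    ∀ ε : ℝ, 0 < ε → ∀ᶠ n in atTop, gAux ΦB f (u n) < gAux ΦB f p + ε := by
  intro ε hε
  by_contra hcon
  rw [Filter.not_eventually] at hcon
  obtain ⟨φ, hφ, hφP⟩ := Filter.extraction_of_frequently_atTop
    (hcon.mono fun n hn => not_lt.1 hn)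
  -- pick maximizers along the subsequence
  have hmax : ∀ k : ℕ, ∃ b ∈ ΦB (u (φ k)).1 (u (φ k)).2,
      f ((u (φ k)).1, (u (φ k)).2, b) = gAux ΦB f (u (φ k)) :=
    fun k => (key_g hA hB hAlscmap hAlscB hsup hswap (u (φ k)) (hu (φ k))).1
  choose bs hbs hbf using hmax
  -- the convergent sequence together with its limit is compact
  have hC : IsCompact (insert p (Set.range (u ∘ φ))) :=
    (ht.comp hφ.tendsto_atTop).isCompact_insert_range
  have hCsub : insert p (Set.range (u ∘ φ)) ⊆ {q : X × A | q.2 ∈ ΦA q.1} := by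
    rintro q (rfl | ⟨k, rfl⟩)
    · exact hp
    · exact hu (φ k)
  have hS := hsup _ (Set.insert_nonempty _ _) hC hCsub (gAux ΦB f p + ε)
  have hmem : ∀ k : ℕ, ((u (φ k), bs k) : (X × A) × B) ∈
      {q : (X × A) × B | q.1 ∈ insert p (Set.range (u ∘ φ)) ∧ q.2 ∈ ΦB q.1.1 q.1.2 ∧
        gAux ΦB f p + ε ≤ f (q.1.1, q.1.2, q.2)} := by
    intro k
    refine ⟨Set.mem_insert_of_mem _ ⟨k, rfl⟩, hbs k, ?_⟩
    rw [hbf k]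
    exact hφP k
  obtain ⟨r, hrS, ψ, hψ, hconv⟩ := hS.tendsto_subseq hmem
  have hr1 : r.1 = p := by
    have h1 : Tendsto (fun k => ((u (φ (ψ k)), bs (ψ k)) : (X × A) × B).1) atTop (𝓝 p) :=
      (ht.comp hφ.tendsto_atTop).comp hψ.tendsto_atTop
    have h2 : Tendsto (fun k => ((u (φ (ψ k)), bs (ψ k)) : (X × A) × B).1) atTop (𝓝 r.1) :=
      ((continuous_fst.tendsto r).comp hconv)
    exact tendsto_nhds_unique h2 h1
  have hkey := (key_g hA hB hAlscmap hAlscB hsup hswap p hp).2.1 r.2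
    (by rw [← hr1]; exact hrS.2.1)
  have := hrS.2.2
  rw [hr1] at this
  linarith

/-- `g` is lower semicontinuous along graph sequences. -/
theorem g_lsc (u : ℕ → X × A) (p : X × A) (hu : ∀ n, (u n).2 ∈ ΦA (u n).1)
    (hp : p.2 ∈ ΦA p.1) (ht : Tendsto u atTop (𝓝 p)) :
    ∀ ε : ℝ, 0 < ε → ∀ᶠ n in atTop, gAux ΦB f p - ε < gAux ΦB f (u n) := by
  intro ε hε
  by_contra hcon
  rw [Filter.not_eventually] at hcon
  obtain ⟨φ, hφ, hφP⟩ := Filter.extraction_of_frequently_atTop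
    (hcon.mono fun n hn => not_lt.1 hn)
  -- maximizer at the limit point
  obtain ⟨bstar, hbstar, hbstarf⟩ := (key_g hA hB hAlscmap hAlscB hsup hswap p hp).1
  -- use A-lower semicontinuity of ΦB to approximate bstar
  have htfst : Tendsto (fun k => (u (φ k)).1) atTop (𝓝 p.1) :=
    (continuous_fst.tendsto p).comp (ht.comp hφ.tendsto_atTop)
  obtain ⟨bsq, hbsq, hbcl⟩ := hAlscB p.1 (fun k => (u (φ k)).1) htfst
    (fun k => (u (φ k)).2) (fun k => hu (φ k)) p.2 hp bstar hbstar
  obtain ⟨ψ, hψ, hbConv⟩ := TopologicalSpace.FirstCountableTopology.tendsto_subseq hbcl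
  -- the compact set in X × B
  have hCt : Tendsto (fun k => (((u (φ (ψ k))).1, bsq (ψ k)) : X × B)) atTop
      (𝓝 (p.1, bstar)) :=
    (htfst.comp hψ.tendsto_atTop).prodMk_nhds hbConv
  have hC : IsCompact (insert ((p.1, bstar) : X × B)
      (Set.range fun k => (((u (φ (ψ k))).1, bsq (ψ k)) : X × B))) :=
    hCt.isCompact_insert_range
  have hCsub : insert ((p.1, bstar) : X × B)
      (Set.range fun k => (((u (φ (ψ k))).1, bsq (ψ k)) : X × B)) ⊆
      {q : X × B | ∃ a ∈ ΦA q.1, q.2 ∈ ΦB q.1 a} := by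
    rintro q (rfl | ⟨k, rfl⟩)
    · exact ⟨p.2, hp, hbstar⟩
    · exact ⟨(u (φ (ψ k))).2, hu (φ (ψ k)), hbsq (ψ k)⟩
  have hT := hswap _ (Set.insert_nonempty _ _) hC hCsub (gAux ΦB f p - ε)
  -- the sequence of triples lies in the compact set
  have hmem : ∀ k : ℕ, (((((u (φ (ψ k))).1, bsq (ψ k)) : X × B), (u (φ (ψ k))).2) :
      (X × B) × A) ∈ {r : (X × B) × A | r.1 ∈ insert ((p.1, bstar) : X × B)
        (Set.range fun k => (((u (φ (ψ k))).1, bsq (ψ k)) : X × B)) ∧ r.2 ∈ ΦA r.1.1 ∧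
        r.1.2 ∈ ΦB r.1.1 r.2 ∧ f (r.1.1, r.2, r.1.2) ≤ gAux ΦB f p - ε} := by
    intro k
    refine ⟨Set.mem_insert_of_mem _ ⟨k, rfl⟩, hu (φ (ψ k)), hbsq (ψ k), ?_⟩
    have h1 := (key_g hA hB hAlscmap hAlscB hsup hswap (u (φ (ψ k))) (hu (φ (ψ k)))).2.1
      (bsq (ψ k)) (hbsq (ψ k))
    exact le_trans h1 (hφP (ψ k))
  -- the triples converge, and the constraint set is closed
  have httrip : Tendsto (fun k => (((((u (φ (ψ k))).1, bsq (ψ k)) : X × B),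
      (u (φ (ψ k))).2) : (X × B) × A)) atTop (𝓝 ((p.1, bstar), p.2)) := by
    refine Tendsto.prodMk_nhds hCt ?_
    exact (continuous_snd.tendsto p).comp ((ht.comp hφ.tendsto_atTop).comp hψ.tendsto_atTop)
  have hlim := hT.isClosed.mem_of_tendsto httrip (Filter.Eventually.of_forall hmem)
  have : f (p.1, p.2, bstar) ≤ gAux ΦB f p - ε := hlim.2.2.2
  rw [hbstarf] at this
  linarith

/-- `g` is continuous along graph sequences. -/
theorem g_tendsto (u : ℕ → X × A) (p : X × A) (hu : ∀ n, (u n).2 ∈ ΦA (u n).1)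
    (hp : p.2 ∈ ΦA p.1) (ht : Tendsto u atTop (𝓝 p)) :
    Tendsto (fun n => gAux ΦB f (u n)) atTop (𝓝 (gAux ΦB f p)) := by
  rw [Metric.tendsto_atTop]
  intro ε hε
  have h1 := g_usc hA hB hAlscmap hAlscB hsup hswap u p hu hp ht ε hε
  have h2 := g_lsc hA hB hAlscmap hAlscB hsup hswap u p hu hp ht ε hε
  rcases eventually_atTop.1 (h1.and h2) with ⟨N, hN⟩
  exact ⟨N, fun n hn => by
    rcases hN n hn with ⟨ha, hb⟩
    rw [Real.dist_eq, abs_sub_lt_iff]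
    constructor <;> linarith⟩

/-- Key compactness property (`K`-inf-compactness of `f♯`). -/
theorem key3 (u : ℕ → X × A) (x : X) (l : ℝ) (hu : ∀ n, (u n).2 ∈ ΦA (u n).1)
    (hx : Tendsto (fun n => (u n).1) atTop (𝓝 x)) (hl : ∀ n, gAux ΦB f (u n) ≤ l) :
    ∃ aInf ∈ ΦA x, gAux ΦB f (x, aInf) ≤ l ∧
      ∃ φ : ℕ → ℕ, StrictMono φ ∧ Tendsto (fun k => (u (φ k)).2) atTop (𝓝 aInf) := by
  obtain ⟨astar, hastar⟩ := hA x
  obtain ⟨bstar, hbstar⟩ := hB x astar hastar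
  obtain ⟨bsq, hbsq, hbcl⟩ := hAlscB x (fun n => (u n).1) hx
    (fun n => (u n).2) hu astar hastar bstar hbstar
  obtain ⟨ψ, hψ, hbConv⟩ := TopologicalSpace.FirstCountableTopology.tendsto_subseq hbcl
  have hxψ : Tendsto (fun k => (u (ψ k)).1) atTop (𝓝 x) := hx.comp hψ.tendsto_atTop
  have hCt : Tendsto (fun k => (((u (ψ k)).1, bsq (ψ k)) : X × B)) atTop (𝓝 (x, bstar)) :=
    hxψ.prodMk_nhds hbConv
  have hC : IsCompact (insert ((x, bstar) : X × B)
      (Set.range fun k => (((u (ψ k)).1, bsq (ψ k)) : X × B))) := hCt.isCompact_insert_range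
  have hCsub : insert ((x, bstar) : X × B)
      (Set.range fun k => (((u (ψ k)).1, bsq (ψ k)) : X × B)) ⊆
      {q : X × B | ∃ a ∈ ΦA q.1, q.2 ∈ ΦB q.1 a} := by
    rintro q (rfl | ⟨k, rfl⟩)
    · exact ⟨astar, hastar, hbstar⟩
    · exact ⟨(u (ψ k)).2, hu (ψ k), hbsq (ψ k)⟩
  have hT := hswap _ (Set.insert_nonempty _ _) hC hCsub l
  have hmem : ∀ k : ℕ, ((((((u (ψ k)).1, bsq (ψ k)) : X × B), (u (ψ k)).2)) : (X × B) × A) ∈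
      {r : (X × B) × A | r.1 ∈ insert ((x, bstar) : X × B)
        (Set.range fun k => (((u (ψ k)).1, bsq (ψ k)) : X × B)) ∧ r.2 ∈ ΦA r.1.1 ∧
        r.1.2 ∈ ΦB r.1.1 r.2 ∧ f (r.1.1, r.2, r.1.2) ≤ l} := by
    intro k
    refine ⟨Set.mem_insert_of_mem _ ⟨k, rfl⟩, hu (ψ k), hbsq (ψ k), ?_⟩
    have h1 := (key_g hA hB hAlscmap hAlscB hsup hswap (u (ψ k)) (hu (ψ k))).2.1
      (bsq (ψ k)) (hbsq (ψ k))
    exact le_trans h1 (hl (ψ k))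
  obtain ⟨r, hrT, ρ, hρ, hconv⟩ := hT.tendsto_subseq hmem
  have hr1 : r.1 = (x, bstar) := by
    have h1 : Tendsto (fun k => ((((u (ψ (ρ k))).1, bsq (ψ (ρ k))) : X × B))) atTop
        (𝓝 (x, bstar)) := hCt.comp hρ.tendsto_atTop
    have h2 := (continuous_fst.tendsto r).comp hconv
    exact tendsto_nhds_unique h2 h1
  have haInfMem : r.2 ∈ ΦA x := by
    have := hrT.2.1
    rwa [hr1] at this
  have haconv : Tendsto (fun k => (u (ψ (ρ k))).2) atTop (𝓝 r.2) :=
    (continuous_snd.tendsto r).comp hconv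
  refine ⟨r.2, haInfMem, ?_, ψ ∘ ρ, hψ.comp hρ, haconv⟩
  -- it remains to show that `g (x, r.2) ≤ l`, using lower semicontinuity of `g`
  have hupair : Tendsto (fun k => u (ψ (ρ k))) atTop (𝓝 (x, r.2)) := by
    have := (hxψ.comp hρ.tendsto_atTop).prodMk_nhds haconv
    simpa using this
  apply le_of_forall_pos_le_add
  intro ε hε
  have hev := g_lsc hA hB hAlscmap hAlscB hsup hswap (fun k => u (ψ (ρ k))) (x, r.2)
    (fun k => hu (ψ (ρ k))) haInfMem hupair ε hε
  obtain ⟨k, hk⟩ := hev.exists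
  have := hl (ψ (ρ k))
  linarith

/-- The minimum in the definition of `v♯` is attained, and `v♯` is real-valued. -/
theorem key_w (x : X) :
    (∃ a ∈ ΦA x, gAux ΦB f (x, a) = wAux ΦA ΦB f x) ∧
    (∀ a ∈ ΦA x, wAux ΦA ΦB f x ≤ gAux ΦB f (x, a)) ∧
    vSharp ΦA ΦB f x = (wAux ΦA ΦB f x : EReal) := by
  -- First, find a minimizer of `g (x, ·)` over `ΦA x`.
  have hmin : ∃ a ∈ ΦA x, ∀ a' ∈ ΦA x, gAux ΦB f (x, a) ≤ gAux ΦB f (x, a') := by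
    set V := (fun a => gAux ΦB f (x, a)) '' ΦA x with hV
    have hVne : V.Nonempty := (hA x).image _
    -- V is bounded below
    have hVbdd : BddBelow V := by
      by_contra hbd
      rw [not_bddBelow_iff] at hbd
      have hseq : ∀ n : ℕ, ∃ a ∈ ΦA x, gAux ΦB f (x, a) < -(n : ℝ) := by
        intro n
        obtain ⟨v, hvV, hv⟩ := hbd (-(n : ℝ))
        obtain ⟨a, ha, rfl⟩ := hvV
        exact ⟨a, ha, hv⟩
      choose as has hasf using hseq
      have hkey := key3 hA hB hAlscmap hAlscB hsup hswap (fun n => (x, as n)) x 0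
        (fun n => has n) tendsto_const_nhds
        (fun n => le_of_lt (lt_of_lt_of_le (hasf n) (neg_nonpos.2 (Nat.cast_nonneg n))))
      obtain ⟨aInf, haInf, _, φ, hφ, hconv⟩ := hkey
      have hupair : Tendsto (fun k => ((x, as (φ k)) : X × A)) atTop (𝓝 (x, aInf)) := by
        exact tendsto_const_nhds.prodMk_nhds hconv
      have hev := g_lsc hA hB hAlscmap hAlscB hsup hswap (fun k => (x, as (φ k))) (x, aInf)
        (fun k => has (φ k)) haInf hupair 1 one_pos
      obtain ⟨n, hn, hgn⟩ := (hev.and (eventually_ge_atTop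
        (Nat.ceil (1 - gAux ΦB f (x, aInf) + 1)))).exists
      have h1 := hasf (φ n)
      have h2 : (n : ℝ) ≤ (φ n : ℝ) := by exact_mod_cast hφ.le_apply
      have h3 : (1 - gAux ΦB f (x, aInf) + 1 : ℝ) ≤ (n : ℝ) :=
        le_trans (Nat.le_ceil _) (by exact_mod_cast hgn)
      linarith
    set m := sInf V with hm
    have hmle : ∀ a ∈ ΦA x, m ≤ gAux ΦB f (x, a) := fun a ha => csInf_le hVbdd ⟨a, ha, rfl⟩
    have happrox : ∀ n : ℕ, ∃ a ∈ ΦA x, gAux ΦB f (x, a) < m + 1 / (n + 1) := by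
      intro n
      have h1 : m < m + 1 / ((n : ℝ) + 1) := by
        have : (0 : ℝ) < 1 / ((n : ℝ) + 1) := by positivity
        linarith
      obtain ⟨v, hvV, hv⟩ := exists_lt_of_csInf_lt hVne h1
      obtain ⟨a, ha, rfl⟩ := hvV
      exact ⟨a, ha, hv⟩
    choose as has hasf using happrox
    have hkey := key3 hA hB hAlscmap hAlscB hsup hswap (fun n => (x, as n)) x (m + 1)
      (fun n => has n) tendsto_const_nhds
      (fun n => by
        have := hasf n
        have h1 : (1 : ℝ) / ((n : ℝ) + 1) ≤ 1 := by
          rw [div_le_one (by positivity)]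
          linarith [Nat.cast_nonneg (α := ℝ) n]
        linarith)
    obtain ⟨aInf, haInf, _, φ, hφ, hconv⟩ := hkey
    refine ⟨aInf, haInf, fun a' ha' => le_trans ?_ (hmle a' ha')⟩
    -- show g (x, aInf) ≤ m
    apply le_of_forall_pos_le_add
    intro ε hε
    have hupair : Tendsto (fun k => ((x, as (φ k)) : X × A)) atTop (𝓝 (x, aInf)) :=
      tendsto_const_nhds.prodMk_nhds hconv
    have hev := g_lsc hA hB hAlscmap hAlscB hsup hswap (fun k => (x, as (φ k))) (x, aInf)
      (fun k => has (φ k)) haInf hupair (ε / 2) (by linarith)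
    obtain ⟨n, hn⟩ := exists_nat_one_div_lt (show (0:ℝ) < ε / 2 by linarith)
    obtain ⟨k, hk1, hk2⟩ := (hev.and (eventually_ge_atTop n)).exists
    have h1 := hasf (φ k)
    have h2 : (1 : ℝ) / ((φ k : ℝ) + 1) ≤ 1 / ((n : ℝ) + 1) := by
      apply one_div_le_one_div_of_le (by positivity)
      have : (n : ℝ) ≤ (φ k : ℝ) := by exact_mod_cast le_trans hk2 hφ.le_apply
      linarith
    linarith
  obtain ⟨a0, ha0, hmin0⟩ := hmin
  -- now compute vSharp
  have hfs : ∀ a ∈ ΦA x, fSharp ΦB f (x, a) = (gAux ΦB f (x, a) : EReal) :=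
    fun a ha => (key_g hA hB hAlscmap hAlscB hsup hswap (x, a) ha).2.2
  have hv : vSharp ΦA ΦB f x = (gAux ΦB f (x, a0) : EReal) := by
    apply le_antisymm
    · rw [← hfs a0 ha0]
      exact iInf₂_le a0 ha0
    · apply le_iInf₂
      intro a ha
      rw [hfs a ha]
      exact EReal.coe_le_coe_iff.2 (hmin0 a ha)
  have hw : wAux ΦA ΦB f x = gAux ΦB f (x, a0) := by
    rw [wAux, hv, EReal.toReal_coe]
  exact ⟨⟨a0, ha0, hw.symm⟩, fun a ha => hw ▸ hmin0 a ha, by rw [hv, hw]⟩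

/-- `w` is continuous. -/
theorem w_usc (xs : ℕ → X) (x : X) (ht : Tendsto xs atTop (𝓝 x)) :
    ∀ ε : ℝ, 0 < ε → ∀ᶠ n in atTop, wAux ΦA ΦB f (xs n) < wAux ΦA ΦB f x + ε := by
  intro ε hε
  by_contra hcon
  rw [Filter.not_eventually] at hcon
  obtain ⟨φ, hφ, hφP⟩ := Filter.extraction_of_frequently_atTop
    (hcon.mono fun n hn => not_lt.1 hn)
  obtain ⟨a, ha, haw⟩ := (key_w hA hB hAlscmap hAlscB hsup hswap x).1
  obtain ⟨as, has, hacl⟩ := hAlscmap x (fun k => xs (φ k)) (ht.comp hφ.tendsto_atTop) a ha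
  obtain ⟨ψ, hψ, haConv⟩ := TopologicalSpace.FirstCountableTopology.tendsto_subseq hacl
  have hupair : Tendsto (fun k => ((xs (φ (ψ k)), as (ψ k)) : X × A)) atTop (𝓝 (x, a)) :=
    ((ht.comp hφ.tendsto_atTop).comp hψ.tendsto_atTop).prodMk_nhds haConv
  have hev := g_usc hA hB hAlscmap hAlscB hsup hswap (fun k => (xs (φ (ψ k)), as (ψ k)))
    (x, a) (fun k => has (ψ k)) ha hupair ε hε
  obtain ⟨k, hk⟩ := hev.exists
  have h1 := (key_w hA hB hAlscmap hAlscB hsup hswap (xs (φ (ψ k)))).2.1 (as (ψ k)) (has (ψ k))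
  have h2 := hφP (ψ k)
  rw [haw] at hk
  linarith

theorem w_lsc (xs : ℕ → X) (x : X) (ht : Tendsto xs atTop (𝓝 x)) :
    ∀ ε : ℝ, 0 < ε → ∀ᶠ n in atTop, wAux ΦA ΦB f x - ε < wAux ΦA ΦB f (xs n) := by
  intro ε hε
  by_contra hcon
  rw [Filter.not_eventually] at hcon
  obtain ⟨φ, hφ, hφP⟩ := Filter.extraction_of_frequently_atTop
    (hcon.mono fun n hn => not_lt.1 hn)
  have hattain : ∀ k : ℕ, ∃ a ∈ ΦA (xs (φ k)),
      gAux ΦB f (xs (φ k), a) = wAux ΦA ΦB f (xs (φ k)) :=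
    fun k => (key_w hA hB hAlscmap hAlscB hsup hswap (xs (φ k))).1
  choose as has hasf using hattain
  have hkey := key3 hA hB hAlscmap hAlscB hsup hswap (fun k => (xs (φ k), as k)) x
    (wAux ΦA ΦB f x - ε) (fun k => has k) (ht.comp hφ.tendsto_atTop)
    (fun k => by rw [hasf k]; exact hφP k)
  obtain ⟨aInf, haInf, hgle, _, _, _⟩ := hkey
  have := (key_w hA hB hAlscmap hAlscB hsup hswap x).2.1 aInf haInf
  linarith

theorem w_cont : Continuous (wAux ΦA ΦB f (X := X) (B := B)) := by
  rw [continuous_iff_seqContinuous]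
  intro xs x ht
  rw [Metric.tendsto_atTop]
  intro ε hε
  have h1 := w_usc hA hB hAlscmap hAlscB hsup hswap xs x ht ε hε
  have h2 := w_lsc hA hB hAlscmap hAlscB hsup hswap xs x ht ε hε
  rcases eventually_atTop.1 (h1.and h2) with ⟨N, hN⟩
  exact ⟨N, fun n hn => by
    rcases hN n hn with ⟨ha, hb⟩
    rw [Function.comp_apply, Real.dist_eq, abs_sub_lt_iff]
    constructor <;> linarith⟩

end Main

end Stmt10Aux

open Stmt10Aux in
/-- Theorem 3.8 (extension of Berge's maximum theorem to the minimax setting): if `Φ_A`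
is lower semicontinuous, `Φ_B` is `A`-lower semicontinuous, `f` is real-valued and
`K`-sup-compact on `Gr(Φ_B)`, and `f^{A↔B}` is `K`-inf-compact on `Gr(Φ_B^{A↔B})`,
then `f♯` and `v♯` are continuous, the infimum and the suprema are attained, and the
solution multifunctions `Φ_A*` and `Φ_B*` are upper semicontinuous and compact-valued. -/
theorem stmt10
    (ΦA : X → Set A) (hA : ∀ x, (ΦA x).Nonempty)
    (ΦB : X → A → Set B) (hB : ∀ x, ∀ a ∈ ΦA x, (ΦB x a).Nonempty)
    (hAlscmap : ∀ (x : X) (xs : ℕ → X), Tendsto xs atTop (𝓝 x) →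
      ∀ a ∈ ΦA x, ∃ as : ℕ → A, (∀ n, as n ∈ ΦA (xs n)) ∧ MapClusterPt a atTop as)
    (hAlscB : ∀ (x : X) (xs : ℕ → X), Tendsto xs atTop (𝓝 x) →
      ∀ as : ℕ → A, (∀ n, as n ∈ ΦA (xs n)) →
        ∀ a ∈ ΦA x, ∀ b ∈ ΦB x a,
          ∃ bs : ℕ → B, (∀ n, bs n ∈ ΦB (xs n) (as n)) ∧ MapClusterPt b atTop bs)
    (f : X × A × B → ℝ)
    (hsup : ∀ C : Set (X × A), C.Nonempty → IsCompact C →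
      C ⊆ {p : X × A | p.2 ∈ ΦA p.1} →
      ∀ l : ℝ, IsCompact {q : (X × A) × B | q.1 ∈ C ∧ q.2 ∈ ΦB q.1.1 q.1.2 ∧
        l ≤ f (q.1.1, q.1.2, q.2)})
    (hswap : ∀ C : Set (X × B), C.Nonempty → IsCompact C →
      C ⊆ {q : X × B | ∃ a ∈ ΦA q.1, q.2 ∈ ΦB q.1 a} →
      ∀ l : ℝ, IsCompact {r : (X × B) × A | r.1 ∈ C ∧ r.2 ∈ ΦA r.1.1 ∧
        r.1.2 ∈ ΦB r.1.1 r.2 ∧ f (r.1.1, r.2, r.1.2) ≤ l}) :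
    -- (1) continuity of the worst-loss and minimax functions
    ContinuousOn (fSharp ΦB f) {p : X × A | p.2 ∈ ΦA p.1} ∧
    Continuous (vSharp ΦA ΦB f) ∧
    -- (2) the infimum is attained and `Φ_A*` is upper semicontinuous and compact-valued
    (∀ x : X, ∃ a ∈ ΦA x, fSharp ΦB f (x, a) = vSharp ΦA ΦB f x) ∧
    (∀ x : X, IsCompact (ΦAstar ΦA ΦB f x) ∧
      ∀ G : Set A, IsOpen G → ΦAstar ΦA ΦB f x ⊆ G →
        ∃ U ∈ 𝓝 x, ∀ x' ∈ U, ΦAstar ΦA ΦB f x' ⊆ G) ∧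
    -- (3) the suprema are attained and `Φ_B*` is upper semicontinuous and compact-valued
    (∀ p : X × A, p.2 ∈ ΦA p.1 → ∃ b ∈ ΦB p.1 p.2,
      (f (p.1, p.2, b) : EReal) = fSharp ΦB f p) ∧
    (∀ p : X × A, p.2 ∈ ΦA p.1 → IsCompact (ΦBstar ΦB f p) ∧
      ∀ G : Set B, IsOpen G → ΦBstar ΦB f p ⊆ G →
        ∃ U ∈ 𝓝 p, ∀ q ∈ U ∩ {p' : X × A | p'.2 ∈ ΦA p'.1}, ΦBstar ΦB f q ⊆ G) := by
  have KG := fun (p : X × A) (hp : p.2 ∈ ΦA p.1) => key_g hA hB hAlscmap hAlscB hsup hswap p hp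
  have KW := fun (x : X) => key_w hA hB hAlscmap hAlscB hsup hswap x
  have K3 := key3 hA hB hAlscmap hAlscB hsup hswap
  have GT := g_tendsto hA hB hAlscmap hAlscB hsup hswap
  classical
  have Glsc := g_lsc hA hB hAlscmap hAlscB hsup hswap
  have WC := w_cont hA hB hAlscmap hAlscB hsup hswap
  set s : Set (X × A) := {p : X × A | p.2 ∈ ΦA p.1} with hs
  -- (1a) continuity of fSharp on the graph
  have hcont1 : ContinuousOn (fSharp ΦB f) s := by
    intro p hp
    have hp' : p.2 ∈ ΦA p.1 := hp
    rw [ContinuousWithinAt, (KG p hp').2.2]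
    have hg : Tendsto (gAux ΦB f) (𝓝[s] p) (𝓝 (gAux ΦB f p)) := by
      rw [tendsto_iff_seq_tendsto]
      intro u hu
      rw [tendsto_nhdsWithin_iff] at hu
      obtain ⟨hu1, hu2⟩ := hu
      set u' : ℕ → X × A := fun n => if (u n).2 ∈ ΦA (u n).1 then u n else p with hu'
      have hmem : ∀ n, (u' n).2 ∈ ΦA (u' n).1 := fun n => by
        by_cases h : (u n).2 ∈ ΦA (u n).1 <;> simp [hu', h, hp']
      have heq : u' =ᶠ[atTop] u := hu2.mono fun n hn => by
        have hn' : (u n).2 ∈ ΦA (u n).1 := hn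
        simp [hu', hn']
      have ht' : Tendsto u' atTop (𝓝 p) := hu1.congr' heq.symm
      have h3 := GT u' p hmem hp' ht'
      exact h3.congr' (heq.mono fun n hn => by simp only [Function.comp_apply, hn])
    have hco : Tendsto (fun q => ((gAux ΦB f q : ℝ) : EReal)) (𝓝[s] p)
        (𝓝 ((gAux ΦB f p : ℝ) : EReal)) := (continuous_coe_real_ereal.tendsto _).comp hg
    refine Tendsto.congr' ?_ hco
    exact eventually_nhdsWithin_of_forall fun q hq => ((KG q hq).2.2).symm
  -- (1b) continuity of vSharp
  have hveq : vSharp ΦA ΦB f = fun x => ((wAux ΦA ΦB f x : ℝ) : EReal) :=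
    funext fun x => (KW x).2.2
  have hcont2 : Continuous (vSharp ΦA ΦB f) := by
    rw [hveq]
    exact continuous_coe_real_ereal.comp WC
  -- (2a) infimum attained
  have hinf : ∀ x : X, ∃ a ∈ ΦA x, fSharp ΦB f (x, a) = vSharp ΦA ΦB f x := by
    intro x
    obtain ⟨a, ha, haw⟩ := (KW x).1
    refine ⟨a, ha, ?_⟩
    rw [(KG (x, a) ha).2.2, (KW x).2.2]
    exact congrArg Real.toEReal haw
  -- description of ΦAstar
  have hstar_eq : ∀ x, ΦAstar ΦA ΦB f x =
      {a | a ∈ ΦA x ∧ gAux ΦB f (x, a) ≤ wAux ΦA ΦB f x} := by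
    intro x
    ext a
    simp only [ΦAstar, Set.mem_setOf_eq]
    constructor
    · rintro ⟨ha, heq⟩
      refine ⟨ha, ?_⟩
      rw [(KG (x, a) ha).2.2, (KW x).2.2] at heq
      exact le_of_eq (by exact_mod_cast heq)
    · rintro ⟨ha, hle⟩
      refine ⟨ha, ?_⟩
      rw [(KG (x, a) ha).2.2, (KW x).2.2]
      exact congrArg Real.toEReal (le_antisymm hle ((KW x).2.1 a ha))
  -- (2b) ΦAstar is compact-valued and upper semicontinuous
  have hstar : ∀ x : X, IsCompact (ΦAstar ΦA ΦB f x) ∧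
      ∀ G : Set A, IsOpen G → ΦAstar ΦA ΦB f x ⊆ G →
        ∃ U ∈ 𝓝 x, ∀ x' ∈ U, ΦAstar ΦA ΦB f x' ⊆ G := by
    intro x
    constructor
    · -- compactness
      apply IsSeqCompact.isCompact
      intro as has
      have has' : ∀ n, as n ∈ ΦA x ∧ gAux ΦB f (x, as n) ≤ wAux ΦA ΦB f x := fun n => by
        have := has n
        rwa [hstar_eq x] at this
      obtain ⟨aInf, haInf, hgle, φ, hφ, hconv⟩ := K3 (fun n => (x, as n)) x
        (wAux ΦA ΦB f x) (fun n => (has' n).1) tendsto_const_nhds (fun n => (has' n).2)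
      refine ⟨aInf, ?_, φ, hφ, hconv⟩
      rw [hstar_eq x]
      exact ⟨haInf, hgle⟩
    · -- upper semicontinuity
      intro G hGopen hGsub
      by_contra hcon
      push_neg at hcon
      have hseq : ∀ n : ℕ, ∃ x', x' ∈ Metric.ball x (1 / (n + 1)) ∧
          ∃ a, a ∈ ΦAstar ΦA ΦB f x' ∧ a ∉ G := by
        intro n
        obtain ⟨x', hx', hns⟩ := hcon (Metric.ball x (1 / (n + 1)))
          (Metric.ball_mem_nhds x (by positivity))
        obtain ⟨a, ha, hag⟩ := Set.not_subset.1 hns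
        exact ⟨x', hx', a, ha, hag⟩
      choose xs hxs as has hasG using hseq
      have hxst : Tendsto xs atTop (𝓝 x) := by
        rw [tendsto_iff_dist_tendsto_zero]
        apply squeeze_zero (fun n => dist_nonneg)
          (fun n => le_of_lt (Metric.mem_ball.1 (hxs n)))
          tendsto_one_div_add_atTop_nhds_zero_nat
      have has' : ∀ n, as n ∈ ΦA (xs n) ∧
          gAux ΦB f (xs n, as n) ≤ wAux ΦA ΦB f (xs n) := fun n => by
        have := has n
        rwa [hstar_eq (xs n)] at this
      have hgw : ∀ n, gAux ΦB f (xs n, as n) = wAux ΦA ΦB f (xs n) :=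
        fun n => le_antisymm (has' n).2 ((KW (xs n)).2.1 (as n) (has' n).1)
      have hwt : Tendsto (fun n => wAux ΦA ΦB f (xs n)) atTop (𝓝 (wAux ΦA ΦB f x)) :=
        (WC.tendsto x).comp hxst
      obtain ⟨N, hN⟩ := Metric.tendsto_atTop.1 hwt 1 one_pos
      set u : ℕ → X × A := fun k => (xs (k + N), as (k + N)) with hu
      have humem : ∀ k, (u k).2 ∈ ΦA (u k).1 := fun k => (has' (k + N)).1
      have hufst : Tendsto (fun k => (u k).1) atTop (𝓝 x) :=
        hxst.comp (tendsto_add_atTop_nat N)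
      have hubd : ∀ k, gAux ΦB f (u k) ≤ wAux ΦA ΦB f x + 1 := by
        intro k
        have h1 := hN (k + N) (Nat.le_add_left N k)
        rw [Real.dist_eq, abs_sub_lt_iff] at h1
        have h2 := hgw (k + N)
        simp only [hu]
        linarith [(has' (k + N)).2]
      obtain ⟨aInf, haInf, _, φ, hφ, hconv⟩ := K3 u x (wAux ΦA ΦB f x + 1) humem hufst hubd
      have hgInf : gAux ΦB f (x, aInf) ≤ wAux ΦA ΦB f x := by
        apply le_of_forall_pos_le_add
        intro ε hε
        have hupair : Tendsto (fun k => u (φ k)) atTop (𝓝 (x, aInf)) := by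
          have := (hufst.comp hφ.tendsto_atTop).prodMk_nhds hconv
          simpa using this
        have hev := Glsc (fun k => u (φ k)) (x, aInf) (fun k => humem (φ k)) haInf hupair
          (ε / 2) (by linarith)
        obtain ⟨N2, hN2⟩ := Metric.tendsto_atTop.1 hwt (ε / 2) (by linarith)
        obtain ⟨k, hk1, hk2⟩ := (hev.and (eventually_ge_atTop N2)).exists
        have hφk : φ k + N ≥ N2 := le_trans hk2 (le_trans hφ.le_apply (Nat.le_add_right _ N))
        have h3 := hN2 (φ k + N) hφk
        rw [Real.dist_eq, abs_sub_lt_iff] at h3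
        have h4 := hgw (φ k + N)
        simp only [hu] at hk1 h4
        linarith
      have hmemG : aInf ∈ G := hGsub (by rw [hstar_eq x]; exact ⟨haInf, hgInf⟩)
      have hGev : ∀ᶠ k in atTop, as (φ k + N) ∈ G := hconv (hGopen.mem_nhds hmemG)
      obtain ⟨k, hk⟩ := hGev.exists
      exact hasG (φ k + N) hk
  -- (3a) supremum attained
  have hsupat : ∀ p : X × A, p.2 ∈ ΦA p.1 → ∃ b ∈ ΦB p.1 p.2,
      (f (p.1, p.2, b) : EReal) = fSharp ΦB f p := by
    intro p hp
    obtain ⟨b, hb, hbf⟩ := (KG p hp).1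
    exact ⟨b, hb, by rw [(KG p hp).2.2]; exact congrArg Real.toEReal hbf⟩
  -- (3b) ΦBstar is compact-valued and upper semicontinuous
  have hbstar : ∀ p : X × A, p.2 ∈ ΦA p.1 → IsCompact (ΦBstar ΦB f p) ∧
      ∀ G : Set B, IsOpen G → ΦBstar ΦB f p ⊆ G →
        ∃ U ∈ 𝓝 p, ∀ q ∈ U ∩ s, ΦBstar ΦB f q ⊆ G := by
    intro p hp
    have hbeq : ∀ q : X × A, q.2 ∈ ΦA q.1 → ∀ b,
        (b ∈ ΦBstar ΦB f q ↔ b ∈ ΦB q.1 q.2 ∧ f (q.1, q.2, b) = gAux ΦB f q) := by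
      intro q hq b
      simp only [ΦBstar, Set.mem_setOf_eq]
      constructor
      · rintro ⟨hb, hf⟩
        rw [(KG q hq).2.2] at hf
        exact ⟨hb, by exact_mod_cast hf⟩
      · rintro ⟨hb, hf⟩
        exact ⟨hb, by rw [(KG q hq).2.2]; exact congrArg Real.toEReal hf⟩
    constructor
    · -- compactness
      have hS := hsup {p} (Set.singleton_nonempty _) isCompact_singleton
        (by rintro q hq; obtain rfl : q = p := hq; exact hp) (gAux ΦB f p)
      have heq : ΦBstar ΦB f p = Prod.snd '' {q : (X × A) × B | q.1 ∈ ({p} : Set (X × A)) ∧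
          q.2 ∈ ΦB q.1.1 q.1.2 ∧ gAux ΦB f p ≤ f (q.1.1, q.1.2, q.2)} := by
        ext b
        rw [hbeq p hp b]
        constructor
        · rintro ⟨hb, hf⟩
          exact ⟨(p, b), ⟨rfl, hb, le_of_eq hf.symm⟩, rfl⟩
        · rintro ⟨⟨q1, b'⟩, ⟨hq1, hb', hf'⟩, rfl⟩
          have hq1' : q1 = p := hq1
          rw [hq1'] at hb' hf'
          exact ⟨hb', le_antisymm ((KG p hp).2.1 b' hb') hf'⟩
      rw [heq]
      exact hS.image continuous_snd
    · -- upper semicontinuity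
      intro G hGopen hGsub
      by_contra hcon
      push_neg at hcon
      have hseq : ∀ n : ℕ, ∃ q, (q ∈ Metric.ball p (1 / (n + 1)) ∧ q ∈ s) ∧
          ∃ b, b ∈ ΦBstar ΦB f q ∧ b ∉ G := by
        intro n
        obtain ⟨q, hq, hns⟩ := hcon (Metric.ball p (1 / (n + 1)))
          (Metric.ball_mem_nhds p (by positivity))
        obtain ⟨b, hb, hbg⟩ := Set.not_subset.1 hns
        exact ⟨q, hq, b, hb, hbg⟩
      choose qs hqs bs hbs hbsG using hseq
      have hqmem : ∀ n, (qs n).2 ∈ ΦA (qs n).1 := fun n => (hqs n).2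
      have hqst : Tendsto qs atTop (𝓝 p) := by
        rw [tendsto_iff_dist_tendsto_zero]
        apply squeeze_zero (fun n => dist_nonneg)
          (fun n => le_of_lt (Metric.mem_ball.1 (hqs n).1))
          tendsto_one_div_add_atTop_nhds_zero_nat
      have hfq : ∀ n, f ((qs n).1, (qs n).2, bs n) = gAux ΦB f (qs n) :=
        fun n => ((hbeq (qs n) (hqmem n) (bs n)).1 (hbs n)).2
      have hbmem : ∀ n, bs n ∈ ΦB (qs n).1 (qs n).2 :=
        fun n => ((hbeq (qs n) (hqmem n) (bs n)).1 (hbs n)).1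
      have hgt : Tendsto (fun n => gAux ΦB f (qs n)) atTop (𝓝 (gAux ΦB f p)) :=
        GT qs p hqmem hp hqst
      obtain ⟨N, hN⟩ := Metric.tendsto_atTop.1 hgt 1 one_pos
      set C : Set (X × A) := insert p (Set.range fun k => qs (k + N)) with hC
      have hCc : IsCompact C := (hqst.comp (tendsto_add_atTop_nat N)).isCompact_insert_range
      have hCsub : C ⊆ s := by
        rintro q (rfl | ⟨k, rfl⟩)
        · exact hp
        · exact hqmem (k + N)
      have hSc := hsup C (Set.insert_nonempty _ _) hCc hCsub (gAux ΦB f p - 1)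
      set tr : ℕ → (X × A) × B := fun k => (qs (k + N), bs (k + N)) with htr
      have hmem : ∀ k, tr k ∈ {q : (X × A) × B | q.1 ∈ C ∧ q.2 ∈ ΦB q.1.1 q.1.2 ∧
          gAux ΦB f p - 1 ≤ f (q.1.1, q.1.2, q.2)} := by
        intro k
        refine ⟨Set.mem_insert_of_mem _ ⟨k, rfl⟩, hbmem (k + N), ?_⟩
        have h1 := hN (k + N) (Nat.le_add_left N k)
        rw [Real.dist_eq, abs_sub_lt_iff] at h1
        have h2 := hfq (k + N)
        simp only [htr]
        linarith
      obtain ⟨r, hrS, φ, hφ, hconv⟩ := hSc.tendsto_subseq hmem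
      have hr1 : r.1 = p := by
        have h1 : Tendsto (fun k => (tr (φ k)).1) atTop (𝓝 p) :=
          (hqst.comp (tendsto_add_atTop_nat N)).comp hφ.tendsto_atTop
        exact tendsto_nhds_unique ((continuous_fst.tendsto r).comp hconv) h1
      have hbInf : r.2 ∈ ΦB p.1 p.2 := by
        have := hrS.2.1
        rwa [hr1] at this
      have hfle : f (p.1, p.2, r.2) = gAux ΦB f p := by
        refine le_antisymm ((KG p hp).2.1 r.2 hbInf) ?_
        apply le_of_forall_pos_le_add
        intro ε hε
        have hS2 := hsup C (Set.insert_nonempty _ _) hCc hCsub (gAux ΦB f p - ε)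
        obtain ⟨N2, hN2⟩ := Metric.tendsto_atTop.1 hgt ε hε
        have hev : ∀ᶠ k in atTop, tr (φ k) ∈ {q : (X × A) × B | q.1 ∈ C ∧
            q.2 ∈ ΦB q.1.1 q.1.2 ∧ gAux ΦB f p - ε ≤ f (q.1.1, q.1.2, q.2)} := by
          filter_upwards [eventually_ge_atTop N2] with k hk
          refine ⟨Set.mem_insert_of_mem _ ⟨φ k, rfl⟩, hbmem (φ k + N), ?_⟩
          have h1 := hN2 (φ k + N)
            (le_trans hk (le_trans hφ.le_apply (Nat.le_add_right _ N)))
          rw [Real.dist_eq, abs_sub_lt_iff] at h1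
          have h2 := hfq (φ k + N)
          try simp only [htr]
          linarith
        have hrmem := hS2.isClosed.mem_of_tendsto hconv hev
        have h3 := hrmem.2.2
        rw [hr1] at h3
        linarith
      have hmemG : r.2 ∈ G := hGsub ((hbeq p hp r.2).2 ⟨hbInf, hfle⟩)
      have hbconv : Tendsto (fun k => bs (φ k + N)) atTop (𝓝 r.2) :=
        (continuous_snd.tendsto r).comp hconv
      have hGev : ∀ᶠ k in atTop, bs (φ k + N) ∈ G := hbconv (hGopen.mem_nhds hmemG)
      obtain ⟨k, hk⟩ := hGev.exists
      exact hbsG (φ k + N) hk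
  exact ⟨hcont1, hcont2, hinf, hstar, hsupat, hbstar⟩

end
end

section
/- Let A and B be nonempty convex subsets of vector spaces and f : A × B → ℝ be convex in a for each b and concave in b for each a. Then sup_{b ∈ B} inf_{a ∈ A} f(a,b) = sup over finite subsets F ⊆ B of inf_{a ∈ A} max_{b ∈ F} f(a,b). -/
/-- Two-function lemma: if `g, h` are convex on a convex set `s` and
`max (g a) (h a) ≥ c` on `s`, then some convex combination `λ g + (1-λ) h ≥ c` on `s`. -/
lemma two_fn_lemma {E : Type*} [AddCommGroup E] [Module ℝ E]
    (s : Set E) (hs : Convex ℝ s) (g h : E → ℝ)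
    (hg : ConvexOn ℝ s g) (hh : ConvexOn ℝ s h) (c : ℝ)
    (hmax : ∀ a ∈ s, c ≤ max (g a) (h a)) :
    ∃ l ∈ Set.Icc (0 : ℝ) 1, ∀ a ∈ s, c ≤ l * g a + (1 - l) * h a := by
  by_contra hcon
  push_neg at hcon
  -- hcon : ∀ l ∈ Icc 0 1, ∃ a ∈ s, l * g a + (1-l) * h a < c
  set U : Set ℝ := {l | ∃ a ∈ s, g a < c ∧ l * g a + (1 - l) * h a < c} with hU
  set V : Set ℝ := {l | ∃ a ∈ s, h a < c ∧ l * g a + (1 - l) * h a < c} with hV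
  have hUopen : IsOpen U := by
    have : U = ⋃ a ∈ {a | a ∈ s ∧ g a < c}, {l : ℝ | l * g a + (1 - l) * h a < c} := by
      ext l; simp only [hU, Set.mem_setOf_eq, Set.mem_iUnion]; tauto
    rw [this]
    refine isOpen_biUnion fun a _ => isOpen_lt (by fun_prop) continuous_const
  have hVopen : IsOpen V := by
    have : V = ⋃ a ∈ {a | a ∈ s ∧ h a < c}, {l : ℝ | l * g a + (1 - l) * h a < c} := by
      ext l; simp only [hV, Set.mem_setOf_eq, Set.mem_iUnion]; tauto
    rw [this]
    refine isOpen_biUnion fun a _ => isOpen_lt (by fun_prop) continuous_const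
  have hcover : Set.Icc (0 : ℝ) 1 ⊆ U ∪ V := by
    intro l hl
    obtain ⟨a, ha, hac⟩ := hcon l hl
    rcases lt_or_ge (g a) c with hga | hga
    · exact Or.inl ⟨a, ha, hga, hac⟩
    · refine Or.inr ⟨a, ha, ?_, hac⟩
      by_contra hha
      push_neg at hha
      nlinarith [hl.1, hl.2]
  have hUne : (Set.Icc (0 : ℝ) 1 ∩ U).Nonempty := by
    obtain ⟨a, ha, hac⟩ := hcon 1 ⟨zero_le_one, le_refl 1⟩
    exact ⟨1, ⟨zero_le_one, le_refl 1⟩, a, ha, by linarith, by linarith⟩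
  have hVne : (Set.Icc (0 : ℝ) 1 ∩ V).Nonempty := by
    obtain ⟨a, ha, hac⟩ := hcon 0 ⟨le_refl 0, zero_le_one⟩
    exact ⟨0, ⟨le_refl 0, zero_le_one⟩, a, ha, by linarith, by linarith⟩
  obtain ⟨l, hlIcc, hlU, hlV⟩ :=
    (isPreconnected_Icc : IsPreconnected (Set.Icc (0:ℝ) 1)) U V hUopen hVopen hcover hUne hVne
  have hl0 : (0:ℝ) ≤ l := hlIcc.1
  have hl1 : l ≤ 1 := hlIcc.2
  obtain ⟨a, ha, hga, hpa⟩ := hlU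
  obtain ⟨b, hb, hhb, hpb⟩ := hlV
  have hha : c ≤ h a := by
    have := hmax a ha
    rcases max_cases (g a) (h a) with ⟨h1, _⟩ | ⟨h1, _⟩ <;> linarith
  have hgb : c ≤ g b := by
    have := hmax b hb
    rcases max_cases (g b) (h b) with ⟨h1, _⟩ | ⟨h1, _⟩ <;> linarith
  set α : ℝ := h a - g a with hα
  set β : ℝ := g b - h b with hβ
  have hαpos : 0 < α := by simp [hα]; linarith
  have hβpos : 0 < β := by simp [hβ]; linarith
  set w : ℝ := β / (α + β) with hw
  have hab : 0 < α + β := by linarith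
  have hw0 : 0 ≤ w := le_of_lt (div_pos hβpos hab)
  have hw1 : w ≤ 1 := by rw [hw, div_le_one hab]; linarith
  have hw1' : 1 - w = α / (α + β) := by
    rw [hw, eq_div_iff hab.ne', sub_mul, div_mul_cancel₀ _ hab.ne']; ring
  have hwsum : w + (1 - w) = 1 := by ring
  have hwkey : w * α = (1 - w) * β := by rw [hw1', hw]; field_simp
  set x : E := w • a + (1 - w) • b with hx
  have hxs : x ∈ s := hs ha hb hw0 (by linarith) hwsum
  have hgx : g x ≤ w * g a + (1 - w) * g b := by
    have := hg.2 ha hb hw0 (by linarith : (0:ℝ) ≤ 1 - w) hwsum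
    simpa [smul_eq_mul] using this
  have hhx : h x ≤ w * h a + (1 - w) * h b := by
    have := hh.2 ha hb hw0 (by linarith : (0:ℝ) ≤ 1 - w) hwsum
    simpa [smul_eq_mul] using this
  -- the two bounds agree and are < c
  have hsame : w * h a + (1 - w) * h b = w * g a + (1 - w) * g b := by
    have : w * (h a - g a) = (1 - w) * (g b - h b) := hwkey
    nlinarith [this]
  have hVlt : w * g a + (1 - w) * g b < c := by
    have h1 : w * (l * g a + (1 - l) * h a) + (1 - w) * (l * g b + (1 - l) * h b) < c := by
      nlinarith [hw0, hw1]
    nlinarith [hwkey]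
  have := hmax x hxs
  rcases max_cases (g x) (h x) with ⟨h1, _⟩ | ⟨h1, _⟩
  · linarith
  · rw [hsame] at hhx; linarith

/-- Finite sup of functions convex on `s` is convex on `s`. -/
lemma convexOn_finset_sup' {E ι : Type*} [AddCommGroup E] [Module ℝ E]
    (s : Set E) (g : ι → E → ℝ) :
    ∀ S : Finset ι, ∀ hS : S.Nonempty, (∀ i ∈ S, ConvexOn ℝ s (g i)) →
      ConvexOn ℝ s fun a => S.sup' hS fun i => g i a := by
  intro S hS
  induction hS using Finset.Nonempty.cons_induction with
  | singleton i => intro hg; simpa using hg i (by simp)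
  | cons i S hiS hSne ih =>
      intro hg
      have h1 : ConvexOn ℝ s (g i) := hg i (by simp)
      have h2 := ih fun j hj => hg j (by simp [hj])
      have h3 := h1.sup h2
      simp only [Finset.sup'_cons hSne]
      exact h3
/-- Key finite minimax lemma by induction on the cardinality of `S`. -/
lemma key_lemma {E F : Type*} [AddCommGroup E] [Module ℝ E] [AddCommGroup F] [Module ℝ F]
    (s : Set E) (t : Set F) (hs : Convex ℝ s) (ht : Convex ℝ t) :
    ∀ n : ℕ, ∀ f : E × F → ℝ,
      (∀ b ∈ t, ConvexOn ℝ s fun a => f (a, b)) →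
      (∀ a ∈ s, ConcaveOn ℝ t fun b => f (a, b)) →
      ∀ S : Finset F, S.card = n → ∀ hSne : S.Nonempty, ↑S ⊆ t →
      ∀ c : ℝ, (∀ a ∈ s, c ≤ S.sup' hSne fun b => f (a, b)) →
      ∃ b ∈ t, ∀ a ∈ s, c ≤ f (a, b) := by
  intro n
  induction n with
  | zero =>
      intro f _ _ S hcard hSne _ _ _
      exact absurd hcard (by simp [Finset.card_eq_zero, hSne.ne_empty])
  | succ n ih =>
      intro f hconv hconc S hcard hSne hSt c hc
      obtain ⟨b0, S', hb0S', hins, hcardS'⟩ := Finset.card_eq_succ_iff_cons.mp hcard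
      subst hins
      have hb0t : b0 ∈ t := hSt (by simp)
      rcases S'.eq_empty_or_nonempty with rfl | hS'ne
      · refine ⟨b0, hb0t, fun a ha => ?_⟩
        have := hc a ha
        simpa using this
      · have hS't : ↑S' ⊆ t := fun b hb => hSt (by simp [hb])
        -- two-function lemma with g = f(·, b0), h = sup over S'
        have hg : ConvexOn ℝ s fun a => f (a, b0) := hconv b0 hb0t
        have hh : ConvexOn ℝ s fun a => S'.sup' hS'ne fun b => f (a, b) :=
          convexOn_finset_sup' s (fun b a => f (a, b)) S' hS'ne
            (fun b hb => hconv b (hS't hb))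
        have hmax : ∀ a ∈ s,
            c ≤ max (f (a, b0)) (S'.sup' hS'ne fun b => f (a, b)) := by
          intro a ha
          have := hc a ha
          rwa [Finset.sup'_cons] at this
        obtain ⟨l, ⟨hl0, hl1⟩, hl⟩ := two_fn_lemma s hs _ _ hg hh c hmax
        set f2 : E × F → ℝ := fun p => l * f (p.1, b0) + (1 - l) * f p with hf2
        have hconv2 : ∀ b ∈ t, ConvexOn ℝ s fun a => f2 (a, b) := by
          intro b hb
          have h1 := (hconv b0 hb0t).smul hl0
          have h2 := (hconv b hb).smul (by linarith : (0:ℝ) ≤ 1 - l)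
          have := h1.add h2
          refine this.congr fun x _ => ?_
          simp [hf2, smul_eq_mul]
        have hconc2 : ∀ a ∈ s, ConcaveOn ℝ t fun b => f2 (a, b) := by
          intro a ha
          have h2 := (hconc a ha).smul (by linarith : (0:ℝ) ≤ 1 - l)
          have := (concaveOn_const (l * f (a, b0)) ht).add h2
          refine this.congr fun x _ => ?_
          simp [hf2, smul_eq_mul]
        have hc2 : ∀ a ∈ s, c ≤ S'.sup' hS'ne fun b => f2 (a, b) := by
          intro a ha
          obtain ⟨b1, hb1, hsup⟩ := Finset.exists_mem_eq_sup' hS'ne fun b => f (a, b)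
          have h1 : c ≤ f2 (a, b1) := by
            have := hl a ha
            rw [hsup] at this
            simpa [hf2] using this
          exact le_trans h1 (Finset.le_sup' (fun b => f2 (a, b)) hb1)
        obtain ⟨b1, hb1t, hb1⟩ := ih f2 hconv2 hconc2 S' hcardS' hS'ne hS't c hc2
        refine ⟨l • b0 + (1 - l) • b1, ht hb0t hb1t hl0 (by linarith) (by ring), ?_⟩
        intro a ha
        have hcc := (hconc a ha).2 hb0t hb1t hl0 (by linarith : (0:ℝ) ≤ 1 - l) (by ring)
        have h1 : c ≤ l * f (a, b0) + (1 - l) * f (a, b1) := hb1 a ha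
        calc c ≤ l * f (a, b0) + (1 - l) * f (a, b1) := h1
          _ = l • f (a, b0) + (1 - l) • f (a, b1) := by simp [smul_eq_mul]
          _ ≤ f (a, l • b0 + (1 - l) • b1) := hcc

/-- Aubin–Ekeland lopsided minimax theorem (Theorem 6.2.2): for nonempty convex sets
`s ⊆ E`, `t ⊆ F` and `f : E × F → ℝ` convex in the first variable on `s` and concave in
the second variable on `t`,
`sup_{b ∈ t} inf_{a ∈ s} f (a, b) = sup_{F finite ⊆ t} inf_{a ∈ s} max_{b ∈ F} f (a, b)`
(computed in the extended reals). -/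
theorem stmt17 {E F : Type*} [AddCommGroup E] [Module ℝ E] [AddCommGroup F] [Module ℝ F]
    (s : Set E) (t : Set F) (hs : Convex ℝ s) (ht : Convex ℝ t)
    (hsne : s.Nonempty) (htne : t.Nonempty)
    (f : E × F → ℝ)
    (hconv : ∀ b ∈ t, ConvexOn ℝ s fun a => f (a, b))
    (hconc : ∀ a ∈ s, ConcaveOn ℝ t fun b => f (a, b)) :
    (⨆ b ∈ t, ⨅ a ∈ s, ((f (a, b) : ℝ) : EReal)) =
      ⨆ S : Finset F, ⨆ hS : ↑S ⊆ t ∧ S.Nonempty,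
        ⨅ a ∈ s, ((S.sup' hS.2 fun b => f (a, b) : ℝ) : EReal) := by
  apply le_antisymm
  · refine iSup₂_le fun b hb => ?_
    have hS : ↑({b} : Finset F) ⊆ t ∧ ({b} : Finset F).Nonempty :=
      ⟨by simpa using hb, Finset.singleton_nonempty b⟩
    refine le_trans ?_ (le_iSup_of_le ({b} : Finset F) (le_iSup_of_le hS le_rfl))
    simp [Finset.sup'_singleton]
  · refine iSup₂_le fun S hS => ?_
    by_contra hlt
    push_neg at hlt
    obtain ⟨c, hc1, hc2⟩ := EReal.exists_between_coe_real hlt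
    have hcineq : ∀ a ∈ s, c ≤ S.sup' hS.2 fun b => f (a, b) := by
      intro a ha
      have : (c : EReal) < ((S.sup' hS.2 fun b => f (a, b) : ℝ) : EReal) :=
        lt_of_lt_of_le hc2 (iInf₂_le a ha)
      exact_mod_cast this.le
    obtain ⟨b, hbt, hb⟩ := key_lemma s t hs ht S.card f hconv hconc S rfl hS.2 hS.1 c hcineq
    have hle : (c : EReal) ≤ ⨆ b ∈ t, ⨅ a ∈ s, ((f (a, b) : ℝ) : EReal) := by
      refine le_trans ?_ (le_iSup₂_of_le b hbt le_rfl)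
      exact le_iInf₂ fun a ha => by exact_mod_cast hb a ha
    exact absurd hc1 (not_lt.mpr hle)
end
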